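/- Fix τ, σ ≥ 1 and n, and let d = gcd(τ, σ), k = lcm(τ, σ), x = σ/d, with k ≤ n. Let 𝒯^{(0,x)} be the set of simple tiles of periodic solutions with periods τ and σ over ℤ_n having rank x (equivalently, having exactly k distinct states), counted up to cyclic shifts of rows and columns, and for 0 ≤ m ≤ k let 𝔗_m be the set of unordered pairs of distinct tiles in 𝒯^{(0,x)} having exactly m states in common. Then: (1) #𝒯^{(0,x)} = φ(d)·C(n,k)·(k−1)!; (2) for m < k, #𝔗_m = (1/2)·φ(d)·C(n,k)·(k−1)!·φ(d)·C(k,m)·C(n−k, k−m)·(k−1)!; and (3) #𝔗_k = (1/2)·φ(d)·C(n,k)·(k−1)!·(φ(d)·(k−1)! − 1). -/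

import Mathlib

open Filter

/-- An `n`-state 2-neighbor cellular automaton rule. -/
abbrev CARule (n : ℕ) := Fin n → Fin n → Fin n

/-- One step of the CA evolution: `ξ_{t+1}(x) = f(ξ_t(x-1), ξ_t(x))`. -/
def caStep {n : ℕ} (f : CARule n) (ξ : ℤ → Fin n) : ℤ → Fin n :=
  fun x => f (ξ (x - 1)) (ξ x)

/-- The trajectory of an initial configuration under the rule `f`. -/
def caTraj {n : ℕ} (f : CARule n) (ξ : ℤ → Fin n) : ℕ → ℤ → Fin n
  | 0 => ξ
  | t + 1 => caStep f (caTraj f ξ t)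

/-- `ξ` is (the initial configuration of) a periodic solution of `f` with
minimal temporal period `τ` and minimal spatial period `σ`. -/
def IsPS {n : ℕ} (f : CARule n) (ξ : ℤ → Fin n) (τ σ : ℕ) : Prop :=
  0 < τ ∧ 0 < σ ∧
  (∀ x : ℤ, ξ (x + (σ : ℤ)) = ξ x) ∧
  (∀ σ' : ℕ, 0 < σ' → (∀ x : ℤ, ξ (x + (σ' : ℤ)) = ξ x) → σ ≤ σ') ∧
  caTraj f ξ τ = ξ ∧
  (∀ τ' : ℕ, 0 < τ' → caTraj f ξ τ' = ξ → τ ≤ τ')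

/-- `η` is a proper initial configuration for the periodic solution `ξ`:
it agrees with `ξ` at all sites `≤ y` for some `y`. -/
def IsProper {n : ℕ} (ξ η : ℤ → Fin n) : Prop :=
  ∃ y : ℤ, ∀ x ≤ y, η x = ξ x

/-- The periodic solution `ξ` of `f` is weakly robust: the expansion velocity is
positive, i.e. there is `v > 0` such that for every proper initial configuration
`η`, eventually (in `t`) the two trajectories agree at all sites `x ≤ v·t`
(equivalently, `inf_η liminf_t s_t(η)/t > 0`). -/
def IsWeaklyRobust {n : ℕ} (f : CARule n) (ξ : ℤ → Fin n) : Prop :=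
  ∃ v : ℝ, 0 < v ∧ ∀ η : ℤ → Fin n, IsProper ξ η →
    ∀ᶠ t : ℕ in atTop, ∀ x : ℤ, (x : ℝ) ≤ v * t → caTraj f η t x = caTraj f ξ t x

/-- The label (τ-periodic sequence) `A` right-extends to `B` under `f`: `A → B`. -/
def RightExtends {n : ℕ} (f : CARule n) (A B : ℕ → Fin n) : Prop :=
  ∀ i : ℕ, f (A i) (B i) = B (i + 1)

/-- The sequence `c_{j+1} = f(a_j, c_j)` started at `c₀`. -/
def chaseSeq {n : ℕ} (f : CARule n) (A : ℕ → Fin n) (c₀ : Fin n) : ℕ → Fin n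
  | 0 => c₀
  | j + 1 => f (A j) (chaseSeq f A c₀ j)

/-- The label `A` decides `B` under `f`: `A ⇒ B`. -/
def Decides {n : ℕ} (f : CARule n) (A B : ℕ → Fin n) : Prop :=
  RightExtends f A B ∧ ∀ c₀ : Fin n, ∃ j : ℕ, chaseSeq f A c₀ j = B j

/-- `T` is a (τ,σ)-periodic array (row index mod τ, column index mod σ). -/
def IsTilePeriodic {n : ℕ} (τ σ : ℕ) (T : ℕ → ℕ → Fin n) : Prop :=
  (∀ i j, T (i + τ) j = T i j) ∧ (∀ i j, T i (j + σ) = T i j)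

/-- The set of states appearing in the tile `T`. -/
def tileStates (n τ σ : ℕ) (T : ℕ → ℕ → Fin n) : Finset (Fin n) :=
  (Finset.range τ ×ˢ Finset.range σ).image fun p => T p.1 p.2

/-- The set of horizontally adjacent pairs appearing in the tile `T`. -/
def tilePairs (n τ σ : ℕ) (T : ℕ → ℕ → Fin n) : Finset (Fin n × Fin n) :=
  (Finset.range τ ×ˢ Finset.range σ).image fun p => (T p.1 p.2, T p.1 (p.2 + 1))

/-- `T` is a tile of a periodic solution: uniqueness of assignment, each row has
minimal period `σ`, and the cyclic sequence of rows has minimal period `τ`. -/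
def IsPSTile (n τ σ : ℕ) (T : ℕ → ℕ → Fin n) : Prop :=
  IsTilePeriodic τ σ T ∧
  (∀ i j k m, T i j = T k m → T i (j + 1) = T k (m + 1) →
      T (i + 1) (j + 1) = T (k + 1) (m + 1)) ∧
  (∀ i : ℕ, ∀ σ' : ℕ, 0 < σ' → (∀ j, T i (j + σ') = T i j) → σ ≤ σ') ∧
  (∀ τ' : ℕ, 0 < τ' → (∀ i j, T (i + τ') j = T i j) → τ ≤ τ')

/-- `T` is a tile of a periodic solution of the given rule `f`. -/
def IsPSTileOf {n : ℕ} (f : CARule n) (τ σ : ℕ) (T : ℕ → ℕ → Fin n) : Prop :=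
  IsTilePeriodic τ σ T ∧
  (∀ i j, f (T i j) (T i (j + 1)) = T (i + 1) (j + 1)) ∧
  (∀ i : ℕ, ∀ σ' : ℕ, 0 < σ' → (∀ j, T i (j + σ') = T i j) → σ ≤ σ') ∧
  (∀ τ' : ℕ, 0 < τ' → (∀ i j, T (i + τ') j = T i j) → τ ≤ τ')

/-- `T` is simple: the assignment number `p(T)` equals the number of states `s(T)`. -/
def IsSimpleTile (n τ σ : ℕ) (T : ℕ → ℕ → Fin n) : Prop :=
  (tilePairs n τ σ T).card = (tileStates n τ σ T).card

/-- The rank of a tile: the largest `x` such that some `x` columns of `T`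
together contain `x * τ` pairwise distinct states. -/
noncomputable def tileRank (n τ σ : ℕ) (T : ℕ → ℕ → Fin n) : ℕ :=
  sSup {x : ℕ | ∃ J : Finset ℕ, J ⊆ Finset.range σ ∧ J.card = x ∧
    ((J ×ˢ Finset.range τ).image fun p => T p.2 p.1).card = x * τ}

/-- The tile of the periodic solution `ξ` of `f`: `a_{i,j} = ξ_i(j)`. -/
def psTile {n : ℕ} (f : CARule n) (ξ : ℤ → Fin n) : ℕ → ℕ → Fin n :=
  fun i j => caTraj f ξ i (j : ℤ)

/-- Simple tiles of periodic solutions with periods `τ, σ` over `ℤ_n` of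
(minimal) rank `x = σ/gcd(τ,σ)`. -/
def RankXTile (n τ σ : ℕ) : Type :=
  {T : ℕ → ℕ → Fin n // IsPSTile n τ σ T ∧ IsSimpleTile n τ σ T ∧
    tileRank n τ σ T = σ / Nat.gcd τ σ}

/-- Identification of tiles by cyclic shifts of rows and columns. -/
def shiftRel {n τ σ : ℕ} (T₁ T₂ : RankXTile n τ σ) : Prop :=
  ∃ r c : ℕ, ∀ i j, T₂.1 i j = T₁.1 (i + r) (j + c)

/-- Tiles up to identification by cyclic shifts of rows and columns. -/
def TileClass (n τ σ : ℕ) : Type :=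
  Quot (@shiftRel n τ σ)

/-- The two tile classes `q₁, q₂` have exactly `m` states in common. -/
def commonStates {n τ σ : ℕ} (q₁ q₂ : TileClass n τ σ) (m : ℕ) : Prop :=
  ∃ T₁ T₂ : RankXTile n τ σ, Quot.mk _ T₁ = q₁ ∧ Quot.mk _ T₂ = q₂ ∧
    (tileStates n τ σ T₁.1 ∩ tileStates n τ σ T₂.1).card = m

namespace TileAux
set_option linter.unusedSectionVars false

variable {n τ σ : ℕ} {T : ℕ → ℕ → Fin n}

section Periodic

lemma row_mul (hp : IsTilePeriodic τ σ T) (i j m : ℕ) : T i (j + σ * m) = T i j := by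
  induction m with
  | zero => rfl
  | succ m ih => rw [Nat.mul_succ, ← Nat.add_assoc, hp.2, ih]

lemma col_mul (hp : IsTilePeriodic τ σ T) (i j m : ℕ) : T (i + τ * m) j = T i j := by
  induction m with
  | zero => rfl
  | succ m ih => rw [Nat.mul_succ, ← Nat.add_assoc, hp.1, ih]

lemma T_mod (hp : IsTilePeriodic τ σ T) (i j : ℕ) : T i j = T (i % τ) (j % σ) := by
  conv_lhs => rw [← Nat.mod_add_div i τ, ← Nat.mod_add_div j σ]
  rw [row_mul hp, col_mul hp]

lemma T_congr (hp : IsTilePeriodic τ σ T) {i i' j j' : ℕ}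
    (h1 : i ≡ i' [MOD τ]) (h2 : j ≡ j' [MOD σ]) : T i j = T i' j' := by
  rw [T_mod hp i j, T_mod hp i' j', h1, h2]

lemma state_mem (hp : IsTilePeriodic τ σ T) (hτ : 0 < τ) (hσ : 0 < σ) (i j : ℕ) :
    T i j ∈ tileStates n τ σ T := by
  refine Finset.mem_image.2 ⟨(i % τ, j % σ), ?_, ?_⟩
  · exact Finset.mem_product.2 ⟨Finset.mem_range.2 (Nat.mod_lt _ hτ),
      Finset.mem_range.2 (Nat.mod_lt _ hσ)⟩
  · exact (T_mod hp i j).symm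

lemma pair_mem (hp : IsTilePeriodic τ σ T) (hτ : 0 < τ) (hσ : 0 < σ) (i j : ℕ) :
    (T i j, T i (j + 1)) ∈ tilePairs n τ σ T := by
  refine Finset.mem_image.2 ⟨(i % τ, j % σ), ?_, ?_⟩
  · exact Finset.mem_product.2 ⟨Finset.mem_range.2 (Nat.mod_lt _ hτ),
      Finset.mem_range.2 (Nat.mod_lt _ hσ)⟩
  · have h1 : T (i % τ) (j % σ) = T i j := (T_mod hp i j).symm
    have h2 : T (i % τ) (j % σ + 1) = T i (j + 1) :=
      T_congr hp (Nat.mod_modEq i τ) ((Nat.mod_modEq j σ).add_right 1)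
    rw [h1, h2]

lemma step_right (hp : IsTilePeriodic τ σ T) (hs : IsSimpleTile n τ σ T)
    (hτ : 0 < τ) (hσ : 0 < σ) {i j k m : ℕ} (h : T i j = T k m) :
    T i (j + 1) = T k (m + 1) := by
  classical
  have himg : (tilePairs n τ σ T).image Prod.fst = tileStates n τ σ T := by
    unfold tilePairs tileStates
    rw [Finset.image_image]
    rfl
  have hcard : ((tilePairs n τ σ T).image Prod.fst).card = (tilePairs n τ σ T).card := by
    rw [himg, ← hs]
  have hinj : Set.InjOn Prod.fst (tilePairs n τ σ T : Set (Fin n × Fin n)) :=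
    Finset.card_image_iff.1 hcard
  have := hinj (Finset.mem_coe.2 (pair_mem hp hτ hσ i j))
    (Finset.mem_coe.2 (pair_mem hp hτ hσ k m)) h
  exact congrArg Prod.snd this

lemma step_right_iter (hp : IsTilePeriodic τ σ T) (hs : IsSimpleTile n τ σ T)
    (hτ : 0 < τ) (hσ : 0 < σ) {i j k m : ℕ} (h : T i j = T k m) (b : ℕ) :
    T i (j + b) = T k (m + b) := by
  induction b with
  | zero => exact h
  | succ b ih => exact step_right hp hs hτ hσ ih

lemma step_down (hT : IsPSTile n τ σ T) (hs : IsSimpleTile n τ σ T)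
    (hτ : 0 < τ) (hσ : 0 < σ) {i j k m : ℕ} (h : T i j = T k m) :
    T (i + 1) j = T (k + 1) m := by
  have hp := hT.1
  have h1 : T i (j + (σ - 1)) = T k (m + (σ - 1)) := step_right_iter hp hs hτ hσ h _
  have h2 : T i (j + (σ - 1) + 1) = T k (m + (σ - 1) + 1) := step_right hp hs hτ hσ h1
  have h3 := hT.2.1 _ _ _ _ h1 h2
  have hσ1 : σ - 1 + 1 = σ := Nat.succ_pred_eq_of_pos hσ
  rw [Nat.add_assoc, Nat.add_assoc, hσ1, hp.2, hp.2] at h3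
  exact h3

lemma step_trans (hT : IsPSTile n τ σ T) (hs : IsSimpleTile n τ σ T)
    (hτ : 0 < τ) (hσ : 0 < σ) {i j k m : ℕ} (h : T i j = T k m) (a b : ℕ) :
    T (i + a) (j + b) = T (k + a) (m + b) := by
  induction a with
  | zero => exact step_right_iter hT.1 hs hτ hσ h b
  | succ a ih => exact step_down hT hs hτ hσ ih

end Periodic

section Phi

variable [NeZero τ] [NeZero σ]

/-- The tile as a function on `ZMod τ × ZMod σ`. -/
def Phi (T : ℕ → ℕ → Fin n) : ZMod τ × ZMod σ → Fin n :=
  fun p => T p.1.val p.2.val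

lemma cast_val_t (a : ZMod τ) : ((a.val : ℕ) : ZMod τ) = a := ZMod.natCast_rightInverse a
lemma cast_val_s (a : ZMod σ) : ((a.val : ℕ) : ZMod σ) = a := ZMod.natCast_rightInverse a

lemma natCast_val_pair (p : ZMod τ × ZMod σ) :
    (((p.1.val : ℕ) : ZMod τ), ((p.2.val : ℕ) : ZMod σ)) = p := by
  ext
  · exact cast_val_t p.1
  · exact cast_val_s p.2

lemma phi_natCast (hp : IsTilePeriodic τ σ T) (i j : ℕ) :
    Phi T ((i : ZMod τ), (j : ZMod σ)) = T i j := by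
  show T ((i : ZMod τ)).val ((j : ZMod σ)).val = T i j
  rw [ZMod.val_natCast, ZMod.val_natCast]
  exact (T_mod hp i j).symm

lemma tau_pos : 0 < τ := Nat.pos_of_ne_zero (NeZero.ne τ)
lemma sigma_pos : 0 < σ := Nat.pos_of_ne_zero (NeZero.ne σ)

lemma phi_add (hp : IsTilePeriodic τ σ T) (u v : ZMod τ × ZMod σ) :
    Phi T (u + v) = T (u.1.val + v.1.val) (u.2.val + v.2.val) := by
  have huv : u + v = (((u.1.val + v.1.val : ℕ) : ZMod τ), ((u.2.val + v.2.val : ℕ) : ZMod σ)) := by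
    push_cast
    rw [cast_val_t, cast_val_t, cast_val_s, cast_val_s]
    rfl
  rw [huv, phi_natCast hp]

lemma phi_trans (hT : IsPSTile n τ σ T) (hs : IsSimpleTile n τ σ T)
    {p q : ZMod τ × ZMod σ} (h : Phi T p = Phi T q) (r : ZMod τ × ZMod σ) :
    Phi T (p + r) = Phi T (q + r) := by
  rw [phi_add hT.1 p r, phi_add hT.1 q r]
  exact step_trans hT hs tau_pos sigma_pos h _ _

/-- The subgroup of periods of the tile. -/
def lam (T : ℕ → ℕ → Fin n) (hT : IsPSTile n τ σ T) (hs : IsSimpleTile n τ σ T) :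
    AddSubgroup (ZMod τ × ZMod σ) where
  carrier := {p | Phi T p = Phi T (0 : ZMod τ × ZMod σ)}
  zero_mem' := rfl
  add_mem' := by
    intro a b ha hb
    have := phi_trans hT hs ha b
    rw [zero_add] at this
    exact this.trans hb
  neg_mem' := by
    intro a ha
    have := phi_trans hT hs ha (-a)
    rw [add_neg_cancel, zero_add] at this
    exact this.symm

lemma mem_lam_iff (hT : IsPSTile n τ σ T) (hs : IsSimpleTile n τ σ T)
    {p : ZMod τ × ZMod σ} : p ∈ lam T hT hs ↔ Phi T p = Phi T (0 : ZMod τ × ZMod σ) := Iff.rfl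

lemma phi_eq_iff (hT : IsPSTile n τ σ T) (hs : IsSimpleTile n τ σ T)
    {p q : ZMod τ × ZMod σ} : Phi T p = Phi T q ↔ p - q ∈ lam T hT hs := by
  constructor
  · intro h
    have := phi_trans hT hs h (-q)
    rw [add_neg_cancel] at this
    rw [mem_lam_iff hT hs, sub_eq_add_neg]
    exact this
  · intro h
    rw [mem_lam_iff hT hs] at h
    have := phi_trans hT hs h q
    rw [sub_add_cancel, zero_add] at this
    exact this

/-- The induced injection on the quotient. -/
def psi (hT : IsPSTile n τ σ T) (hs : IsSimpleTile n τ σ T) :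
    (ZMod τ × ZMod σ) ⧸ lam T hT hs → Fin n :=
  Quotient.lift (Phi T) (by
    intro a b hab
    have hab' : -a + b ∈ lam T hT hs := QuotientAddGroup.leftRel_apply.mp hab
    have : b - a ∈ lam T hT hs := by
      rw [sub_eq_add_neg, add_comm]
      exact hab'
    exact ((phi_eq_iff hT hs).2 this).symm)

lemma psi_mk (hT : IsPSTile n τ σ T) (hs : IsSimpleTile n τ σ T) (p : ZMod τ × ZMod σ) :
    psi hT hs (QuotientAddGroup.mk p) = Phi T p := rfl

lemma psi_inj (hT : IsPSTile n τ σ T) (hs : IsSimpleTile n τ σ T) :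
    Function.Injective (psi hT hs) := by
  intro a b
  induction a using QuotientAddGroup.induction_on
  induction b using QuotientAddGroup.induction_on
  rename_i p q
  rw [psi_mk, psi_mk]
  intro h
  refine (QuotientAddGroup.eq).2 ?_
  have h1 : p - q ∈ lam T hT hs := (phi_eq_iff hT hs).1 h
  have h2 := (lam T hT hs).neg_mem h1
  rw [neg_sub, sub_eq_add_neg, add_comm] at h2
  exact h2

end Phi

section Canonical

variable [NeZero τ] [NeZero σ]

/-- Validity of the period subgroup: trivial intersection with both axes. -/
def AxisTriv (Λ : AddSubgroup (ZMod τ × ZMod σ)) : Prop :=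
  (∀ a : ZMod τ, (a, (0 : ZMod σ)) ∈ Λ → a = 0) ∧
  (∀ b : ZMod σ, ((0 : ZMod τ), b) ∈ Λ → b = 0)

/-- The canonical tile associated to a period subgroup and an injection of the
quotient into the states. -/
def ctile (Λ : AddSubgroup (ZMod τ × ZMod σ)) (ψ : (ZMod τ × ZMod σ) ⧸ Λ → Fin n) :
    ℕ → ℕ → Fin n :=
  fun i j => ψ (QuotientAddGroup.mk ((i : ZMod τ), (j : ZMod σ)))

variable (Λ : AddSubgroup (ZMod τ × ZMod σ)) (ψ : (ZMod τ × ZMod σ) ⧸ Λ → Fin n)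

lemma ctile_apply (i j : ℕ) :
    ctile Λ ψ i j = ψ (QuotientAddGroup.mk ((i : ZMod τ), (j : ZMod σ))) := rfl

lemma ctile_periodic : IsTilePeriodic τ σ (ctile Λ ψ) := by
  constructor <;> intro i j <;> unfold ctile <;> push_cast <;>
    rw [ZMod.natCast_self] <;> ring_nf

lemma ctile_eq_iff (hψ : Function.Injective ψ) {i j k m : ℕ} :
    ctile Λ ψ i j = ctile Λ ψ k m ↔
      (QuotientAddGroup.mk ((i : ZMod τ), (j : ZMod σ)) :
        (ZMod τ × ZMod σ) ⧸ Λ) = QuotientAddGroup.mk ((k : ZMod τ), (m : ZMod σ)) :=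
  ⟨fun h => hψ h, fun h => congrArg ψ h⟩

lemma ctile_isPSTile (hψ : Function.Injective ψ) (hax : AxisTriv Λ) :
    IsPSTile n τ σ (ctile Λ ψ) := by
  refine ⟨ctile_periodic Λ ψ, ?_, ?_, ?_⟩
  · intro i j k m h _
    rw [ctile_eq_iff Λ ψ hψ] at h ⊢
    push_cast
    have : ∀ x y : ZMod τ × ZMod σ, QuotientAddGroup.mk (x + y) =
        (QuotientAddGroup.mk x + QuotientAddGroup.mk y : (ZMod τ × ZMod σ) ⧸ Λ) := fun x y => rfl
    have h1 : ((i : ZMod τ) + 1, (j : ZMod σ) + 1) = ((i : ZMod τ), (j : ZMod σ)) + (1, 1) := rfl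
    have h2 : ((k : ZMod τ) + 1, (m : ZMod σ) + 1) = ((k : ZMod τ), (m : ZMod σ)) + (1, 1) := rfl
    rw [h1, h2, this, this, h]
  · intro i σ' hσ' hper
    by_contra hlt
    push_neg at hlt
    have h0 := hper 0
    rw [ctile_eq_iff Λ ψ hψ] at h0
    have hmem := (QuotientAddGroup.eq).1 h0
    have : ((0 : ZMod τ), ((σ' : ZMod σ))) ∈ Λ := by
      have hmem' := Λ.neg_mem hmem
      simpa using hmem'
    have := hax.2 _ this
    rw [ZMod.natCast_eq_zero_iff] at this
    exact absurd (Nat.le_of_dvd hσ' this) (not_le.2 hlt)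
  · intro τ' hτ' hper
    by_contra hlt
    push_neg at hlt
    have h0 := hper 0 0
    rw [ctile_eq_iff Λ ψ hψ] at h0
    have hmem := (QuotientAddGroup.eq).1 h0
    have : (((τ' : ZMod τ)), (0 : ZMod σ)) ∈ Λ := by
      have hmem' := Λ.neg_mem hmem
      simpa using hmem'
    have := hax.1 _ this
    rw [ZMod.natCast_eq_zero_iff] at this
    exact absurd (Nat.le_of_dvd hτ' this) (not_le.2 hlt)

lemma ctile_states [Fintype ((ZMod τ × ZMod σ) ⧸ Λ)] :
    tileStates n τ σ (ctile Λ ψ) = Finset.univ.image ψ := by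
  classical
  ext s
  simp only [tileStates, Finset.mem_image]
  constructor
  · rintro ⟨p, -, rfl⟩
    exact ⟨QuotientAddGroup.mk ((p.1 : ZMod τ), (p.2 : ZMod σ)), Finset.mem_univ _, rfl⟩
  · rintro ⟨q, -, rfl⟩
    induction q using QuotientAddGroup.induction_on
    rename_i p
    refine ⟨(p.1.val, p.2.val), ?_, ?_⟩
    · exact Finset.mem_product.2 ⟨Finset.mem_range.2 (ZMod.val_lt _),
        Finset.mem_range.2 (ZMod.val_lt _)⟩
    · show ψ _ = ψ _
      congr 1
      congr 1
      exact natCast_val_pair p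
  
lemma ctile_states_card [Fintype ((ZMod τ × ZMod σ) ⧸ Λ)] (hψ : Function.Injective ψ) :
    (tileStates n τ σ (ctile Λ ψ)).card = Nat.card ((ZMod τ × ZMod σ) ⧸ Λ) := by
  classical
  rw [ctile_states, Finset.card_image_of_injective _ hψ, Finset.card_univ,
    Nat.card_eq_fintype_card]

lemma ctile_pairs [Fintype ((ZMod τ × ZMod σ) ⧸ Λ)] :
    tilePairs n τ σ (ctile Λ ψ) = Finset.univ.image
      (fun q => (ψ q, ψ (q + QuotientAddGroup.mk ((0 : ZMod τ), (1 : ZMod σ))))) := by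
  classical
  have key : ∀ i j : ℕ, (QuotientAddGroup.mk ((i : ZMod τ), ((j+1 : ℕ) : ZMod σ)) :
      (ZMod τ × ZMod σ) ⧸ Λ) = QuotientAddGroup.mk ((i : ZMod τ), (j : ZMod σ)) +
        QuotientAddGroup.mk ((0 : ZMod τ), (1 : ZMod σ)) := by
    intro i j
    have : ((i : ZMod τ), ((j+1 : ℕ) : ZMod σ)) = ((i : ZMod τ), (j : ZMod σ)) +
        ((0 : ZMod τ), (1 : ZMod σ)) := by push_cast; ext <;> simp
    rw [this]; rfl
  ext s
  simp only [tilePairs, Finset.mem_image]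
  constructor
  · rintro ⟨p, -, rfl⟩
    refine ⟨QuotientAddGroup.mk ((p.1 : ZMod τ), (p.2 : ZMod σ)), Finset.mem_univ _, ?_⟩
    have h2 : ψ ((QuotientAddGroup.mk ((p.1 : ZMod τ), (p.2 : ZMod σ))) +
        QuotientAddGroup.mk ((0 : ZMod τ), (1 : ZMod σ))) = ctile Λ ψ p.1 (p.2 + 1) :=
      (congrArg ψ (key p.1 p.2)).symm
    exact Prod.ext rfl h2
  · rintro ⟨q, -, rfl⟩
    induction q using QuotientAddGroup.induction_on
    rename_i p
    refine ⟨(p.1.val, p.2.val), ?_, ?_⟩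
    · exact Finset.mem_product.2 ⟨Finset.mem_range.2 (ZMod.val_lt _),
        Finset.mem_range.2 (ZMod.val_lt _)⟩
    · have h1 : ctile Λ ψ p.1.val p.2.val = ψ (QuotientAddGroup.mk p) := by
        show ψ _ = ψ _
        exact congrArg ψ (congrArg _ (natCast_val_pair p))
      have h2 : ctile Λ ψ p.1.val (p.2.val + 1) =
          ψ ((QuotientAddGroup.mk p) + QuotientAddGroup.mk ((0 : ZMod τ), (1 : ZMod σ))) := by
        show ψ _ = ψ _
        rw [key]
        exact congrArg ψ (by rw [natCast_val_pair p])
      exact Prod.ext h1 h2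

lemma ctile_simple (hψ : Function.Injective ψ) : IsSimpleTile n τ σ (ctile Λ ψ) := by
  classical
  letI : Fintype ((ZMod τ × ZMod σ) ⧸ Λ) := Fintype.ofFinite _
  unfold IsSimpleTile
  rw [ctile_states, ctile_pairs, Finset.card_image_of_injective _ hψ,
    Finset.card_image_of_injective]
  intro a b hab
  exact hψ (congrArg Prod.fst hab)

end Canonical

section DirA

variable [NeZero τ] [NeZero σ]

lemma T_eq_ctile (hT : IsPSTile n τ σ T) (hs : IsSimpleTile n τ σ T) :
    T = ctile (lam T hT hs) (psi hT hs) := by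
  funext i j
  rw [ctile_apply, psi_mk, phi_natCast hT.1]

lemma axis_of_min (hT : IsPSTile n τ σ T) (hs : IsSimpleTile n τ σ T) :
    AxisTriv (lam T hT hs) := by
  constructor
  · intro a ha
    by_contra hne
    have hval : 0 < a.val := Nat.pos_of_ne_zero (fun h => hne (by
      rwa [ZMod.val_eq_zero] at h))
    have hper : ∀ i j, T (i + a.val) j = T i j := by
      intro i j
      have h1 := phi_trans hT hs (ha : Phi T (a, (0:ZMod σ)) = Phi T (0 : ZMod τ × ZMod σ))
        ((i : ZMod τ), (j : ZMod σ))
      rw [zero_add] at h1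
      have e : (a, (0:ZMod σ)) + ((i : ZMod τ), (j : ZMod σ)) =
          (((i + a.val : ℕ) : ZMod τ), ((j : ℕ) : ZMod σ)) := by
        push_cast
        rw [cast_val_t]
        ext <;> simp [add_comm]
      rw [e, phi_natCast hT.1, phi_natCast hT.1] at h1
      exact h1
    have := hT.2.2.2 a.val hval hper
    exact absurd (ZMod.val_lt a) (not_lt.2 this)
  · intro b hb
    by_contra hne
    have hval : 0 < b.val := Nat.pos_of_ne_zero (fun h => hne (by
      rwa [ZMod.val_eq_zero] at h))
    have hper : ∀ j, T 0 (j + b.val) = T 0 j := by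
      intro j
      have h1 := phi_trans hT hs (hb : Phi T ((0:ZMod τ), b) = Phi T (0 : ZMod τ × ZMod σ))
        (((0:ℕ) : ZMod τ), (j : ZMod σ))
      rw [zero_add] at h1
      have e : ((0:ZMod τ), b) + (((0:ℕ) : ZMod τ), (j : ZMod σ)) =
          (((0 : ℕ) : ZMod τ), ((j + b.val : ℕ) : ZMod σ)) := by
        push_cast
        rw [cast_val_s]
        ext <;> simp [add_comm]
      rw [e, phi_natCast hT.1, phi_natCast hT.1] at h1
      exact h1
    have := hT.2.2.1 0 b.val hval hper
    exact absurd (ZMod.val_lt b) (not_lt.2 this)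

end DirA

section Rank

variable [NeZero τ] [NeZero σ]
variable (Λ : AddSubgroup (ZMod τ × ZMod σ)) (ψ : (ZMod τ × ZMod σ) ⧸ Λ → Fin n)

/-- The projection of the period subgroup to the column group. -/
def lam2 : AddSubgroup (ZMod σ) := Λ.map (AddMonoidHom.snd (ZMod τ) (ZMod σ))

lemma mem_lam2 {b : ZMod σ} : b ∈ lam2 Λ ↔ ∃ a : ZMod τ, (a, b) ∈ Λ := by
  unfold lam2
  rw [AddSubgroup.mem_map]
  constructor
  · rintro ⟨⟨a, b'⟩, hm, rfl⟩
    exact ⟨a, hm⟩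
  · rintro ⟨a, hm⟩
    exact ⟨(a, b), hm, rfl⟩

lemma card_lam2 (hax : AxisTriv Λ) : Nat.card (lam2 Λ) = Nat.card Λ := by
  symm
  apply Nat.card_congr
  refine Equiv.ofBijective (fun x => ⟨x.1.2, (mem_lam2 Λ).2 ⟨x.1.1, by simpa using x.2⟩⟩) ⟨?_, ?_⟩
  · rintro ⟨⟨a, b⟩, hm⟩ ⟨⟨a', b'⟩, hm'⟩ h
    simp only [Subtype.mk.injEq] at h
    subst h
    have : (-a + a', (0 : ZMod σ)) ∈ Λ := by
      have := Λ.add_mem (Λ.neg_mem hm) hm'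
      simpa using this
    have := hax.1 _ this
    have ha : a = a' := by
      have := congrArg (fun z => a + z) this
      simpa using this.symm
    subst ha
    rfl
  · rintro ⟨b, hb⟩
    obtain ⟨a, hm⟩ := (mem_lam2 Λ).1 hb
    exact ⟨⟨(a, b), hm⟩, rfl⟩

/-- The set of states in column `j`. -/
def colset (j : ℕ) : Finset (Fin n) := (Finset.range τ).image (fun i => ctile Λ ψ i j)

lemma colset_card (hψ : Function.Injective ψ) (hax : AxisTriv Λ) (j : ℕ) :
    (colset Λ ψ j).card = τ := by
  classical
  rw [colset, Finset.card_image_of_injOn, Finset.card_range]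
  intro i hi i' hi' h
  rw [Finset.mem_coe, Finset.mem_range] at hi hi'
  have h1 : (QuotientAddGroup.mk ((i : ZMod τ), (j : ZMod σ)) : (ZMod τ × ZMod σ) ⧸ Λ)
      = QuotientAddGroup.mk ((i' : ZMod τ), (j : ZMod σ)) := hψ h
  have h2 := (QuotientAddGroup.eq).1 h1
  have h3 : (-(i : ZMod τ) + (i' : ZMod τ), (0 : ZMod σ)) ∈ Λ := by simpa using h2
  have h4 := hax.1 _ h3
  have h5 : (i : ZMod τ) = (i' : ZMod τ) := by
    have := congrArg (fun z => (i : ZMod τ) + z) h4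
    simpa using this.symm
  have h6 := (ZMod.natCast_eq_natCast_iff _ _ _).1 h5
  simpa [Nat.ModEq, Nat.mod_eq_of_lt hi, Nat.mod_eq_of_lt hi'] using h6

lemma colset_disjoint (hψ : Function.Injective ψ) {j j' : ℕ}
    (hne : (QuotientAddGroup.mk ((j : ZMod σ)) : ZMod σ ⧸ lam2 Λ) ≠
      QuotientAddGroup.mk ((j' : ZMod σ))) :
    Disjoint (colset Λ ψ j) (colset Λ ψ j') := by
  classical
  rw [Finset.disjoint_left]
  intro s hs hs'
  obtain ⟨i, -, rfl⟩ := Finset.mem_image.1 hs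
  obtain ⟨i', -, hii⟩ := Finset.mem_image.1 hs'
  have h1 : (QuotientAddGroup.mk ((i' : ZMod τ), (j' : ZMod σ)) : (ZMod τ × ZMod σ) ⧸ Λ)
      = QuotientAddGroup.mk ((i : ZMod τ), (j : ZMod σ)) := hψ hii
  have h2 := (QuotientAddGroup.eq).1 h1
  have h3 : (-(j' : ZMod σ) + (j : ZMod σ)) ∈ lam2 Λ := (mem_lam2 Λ).2 ⟨_, by simpa using h2⟩
  exact hne ((QuotientAddGroup.eq).2 h3).symm

lemma colset_eq (hψ : Function.Injective ψ) {j j' : ℕ}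
    (heq : (QuotientAddGroup.mk ((j : ZMod σ)) : ZMod σ ⧸ lam2 Λ) =
      QuotientAddGroup.mk ((j' : ZMod σ))) :
    colset Λ ψ j = colset Λ ψ j' := by
  classical
  have key : ∀ j j' : ℕ, (QuotientAddGroup.mk ((j : ZMod σ)) : ZMod σ ⧸ lam2 Λ) =
      QuotientAddGroup.mk ((j' : ZMod σ)) → colset Λ ψ j ⊆ colset Λ ψ j' := by
    intro j j' hjj
    intro s hs
    obtain ⟨i, -, rfl⟩ := Finset.mem_image.1 hs
    have h2 := (QuotientAddGroup.eq).1 hjj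
    obtain ⟨a, ha⟩ := (mem_lam2 Λ).1 h2
    have h3 : (QuotientAddGroup.mk ((i : ZMod τ), (j : ZMod σ)) : (ZMod τ × ZMod σ) ⧸ Λ)
        = QuotientAddGroup.mk ((i : ZMod τ) + a, (j' : ZMod σ)) := by
      refine (QuotientAddGroup.eq).2 ?_
      have e : -((i : ZMod τ), (j : ZMod σ)) + ((i : ZMod τ) + a, (j' : ZMod σ))
          = (a, -(j : ZMod σ) + (j' : ZMod σ)) := by ext <;> simp <;> ring
      rw [e]
      exact ha
    refine Finset.mem_image.2 ⟨((i : ZMod τ) + a).val, Finset.mem_range.2 (ZMod.val_lt _), ?_⟩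
    have e3 : (QuotientAddGroup.mk ((((((i : ZMod τ) + a).val : ℕ)) : ZMod τ), (j' : ZMod σ)) :
        (ZMod τ × ZMod σ) ⧸ Λ) = QuotientAddGroup.mk ((i : ZMod τ), (j : ZMod σ)) := by
      have e4 : ((((((i : ZMod τ) + a).val : ℕ)) : ZMod τ), (j' : ZMod σ))
          = ((i : ZMod τ) + a, (j' : ZMod σ)) := Prod.ext (cast_val_t _) rfl
      rw [e4, ← h3]
    exact congrArg ψ e3
  exact Finset.Subset.antisymm (key j j' heq) (key j' j heq.symm)

lemma prod_image_eq_biUnion (J : Finset ℕ) :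
    ((J ×ˢ Finset.range τ).image fun p => ctile Λ ψ p.2 p.1) = J.biUnion (colset Λ ψ) := by
  classical
  ext s
  simp only [Finset.mem_image, Finset.mem_biUnion, Finset.mem_product, colset]
  constructor
  · rintro ⟨p, ⟨h1, h2⟩, rfl⟩
    exact ⟨p.1, h1, p.2, h2, rfl⟩
  · rintro ⟨j, hj, i, hi, rfl⟩
    exact ⟨(j, i), ⟨hj, hi⟩, rfl⟩

lemma rank_upper (hψ : Function.Injective ψ) (hax : AxisTriv Λ) {x : ℕ} {J : Finset ℕ}
    (hc : J.card = x)
    (him : ((J ×ˢ Finset.range τ).image fun p => ctile Λ ψ p.2 p.1).card = x * τ) :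
    x ≤ Nat.card (ZMod σ ⧸ lam2 Λ) := by
  classical
  letI : Fintype (ZMod σ ⧸ lam2 Λ) := Fintype.ofFinite _
  rw [prod_image_eq_biUnion] at him
  have hinj : Set.InjOn (fun j : ℕ => (QuotientAddGroup.mk (j : ZMod σ) : ZMod σ ⧸ lam2 Λ))
      (J : Set ℕ) := by
    intro j hj j' hj' heq
    rw [Finset.mem_coe] at hj hj'
    by_contra hne
    have hceq : colset Λ ψ j = colset Λ ψ j' := colset_eq Λ ψ hψ heq
    have hsub : J.biUnion (colset Λ ψ) ⊆ (J.erase j).biUnion (colset Λ ψ) := by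
      intro s hs
      rw [Finset.mem_biUnion] at hs ⊢
      obtain ⟨u, hu, hsu⟩ := hs
      by_cases huj : u = j
      · subst huj
        exact ⟨j', Finset.mem_erase.2 ⟨Ne.symm hne, hj'⟩, by rwa [← hceq]⟩
      · exact ⟨u, Finset.mem_erase.2 ⟨huj, hu⟩, hsu⟩
    have hsum : ∑ u ∈ J.erase j, (colset Λ ψ u).card = (J.erase j).card * τ := by
      rw [Finset.sum_congr rfl (fun u _ => colset_card Λ ψ hψ hax u), Finset.sum_const,
        smul_eq_mul]
    have hle : x * τ ≤ (J.erase j).card * τ := by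
      rw [← him, ← hsum]
      exact le_trans (Finset.card_le_card hsub) Finset.card_biUnion_le
    have hx1 : 0 < x := hc ▸ Finset.card_pos.2 ⟨j, hj⟩
    rw [Finset.card_erase_of_mem hj, hc] at hle
    have htp : 0 < τ := tau_pos (τ := τ)
    have : (x - 1) * τ < x * τ := by
      apply Nat.mul_lt_mul_of_lt_of_le (Nat.sub_lt hx1 Nat.one_pos) (le_refl τ) htp
    omega
  have himg : (J.image (fun j : ℕ => (QuotientAddGroup.mk (j : ZMod σ) : ZMod σ ⧸ lam2 Λ))).card
      = x := by rw [Finset.card_image_of_injOn hinj, hc]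
  rw [← himg, Nat.card_eq_fintype_card]
  exact Finset.card_le_univ _

lemma quotient_card_mul (hax : AxisTriv Λ) :
    Nat.card (ZMod σ ⧸ lam2 Λ) * Nat.card Λ = σ := by
  have h := AddSubgroup.card_eq_card_quotient_mul_card_addSubgroup (lam2 Λ)
  rw [Nat.card_zmod] at h
  rw [← card_lam2 Λ hax, ← h]

lemma mk_natCast_nsmul (m : ℕ) :
    (QuotientAddGroup.mk ((m : ℕ) : ZMod σ) : ZMod σ ⧸ lam2 Λ) =
      m • (QuotientAddGroup.mk ((1 : ℕ) : ZMod σ) : ZMod σ ⧸ lam2 Λ) := by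
  have h1 : ((m : ℕ) : ZMod σ) = m • ((1 : ℕ) : ZMod σ) := by
    simp [nsmul_eq_mul]
  rw [h1]
  exact map_nsmul (QuotientAddGroup.mk' (lam2 Λ)) _ _

lemma addOrderOf_gen :
    addOrderOf (QuotientAddGroup.mk ((1 : ℕ) : ZMod σ) : ZMod σ ⧸ lam2 Λ) =
      Nat.card (ZMod σ ⧸ lam2 Λ) := by
  apply addOrderOf_eq_card_of_forall_mem_zmultiples
  intro q
  induction q using QuotientAddGroup.induction_on
  rename_i z
  rw [AddSubgroup.mem_zmultiples_iff]
  refine ⟨z.val, ?_⟩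
  rw [natCast_zsmul]
  rw [← mk_natCast_nsmul]
  exact congrArg _ (cast_val_s z)

lemma mk_ne_of_lt {a b : ℕ} (hab : a < b)
    (hbc : b - a < Nat.card (ZMod σ ⧸ lam2 Λ)) :
    (QuotientAddGroup.mk ((a : ℕ) : ZMod σ) : ZMod σ ⧸ lam2 Λ) ≠
      QuotientAddGroup.mk ((b : ℕ) : ZMod σ) := by
  intro heq
  have h1 : -((a : ℕ) : ZMod σ) + ((b : ℕ) : ZMod σ) ∈ lam2 Λ := (QuotientAddGroup.eq).1 heq
  have h2 : (((b - a : ℕ) : ℕ) : ZMod σ) ∈ lam2 Λ := by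
    have e : (((b - a : ℕ) : ℕ) : ZMod σ) = -((a : ℕ) : ZMod σ) + ((b : ℕ) : ZMod σ) := by
      have : b = a + (b - a) := by omega
      rw [this]
      push_cast
      ring_nf
      simp [add_comm]
    rw [e]
    exact h1
  have h3 : (QuotientAddGroup.mk (((b - a : ℕ) : ℕ) : ZMod σ) : ZMod σ ⧸ lam2 Λ) = 0 :=
    (QuotientAddGroup.eq_zero_iff _).2 h2
  rw [mk_natCast_nsmul] at h3
  have h4 := (addOrderOf_dvd_iff_nsmul_eq_zero).2 h3
  rw [addOrderOf_gen] at h4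
  have h5 : 0 < b - a := by omega
  exact absurd (Nat.le_of_dvd h5 h4) (not_le.2 hbc)

lemma rank_lower (hψ : Function.Injective ψ) (hax : AxisTriv Λ) {x : ℕ}
    (hx : x ≤ Nat.card (ZMod σ ⧸ lam2 Λ)) :
    ∃ J : Finset ℕ, J ⊆ Finset.range σ ∧ J.card = x ∧
      ((J ×ˢ Finset.range τ).image fun p => ctile Λ ψ p.2 p.1).card = x * τ := by
  classical
  have hcpos : 0 < Nat.card (lam2 Λ) := Nat.card_pos
  have hcs := quotient_card_mul Λ hax
  have hcle : Nat.card (ZMod σ ⧸ lam2 Λ) ≤ σ := by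
    calc Nat.card (ZMod σ ⧸ lam2 Λ) ≤ Nat.card (ZMod σ ⧸ lam2 Λ) * Nat.card Λ :=
          Nat.le_mul_of_pos_right _ (by rw [← card_lam2 Λ hax]; exact Nat.card_pos)
      _ = σ := hcs
  refine ⟨Finset.range x, Finset.range_subset_range.2 (le_trans hx hcle), Finset.card_range x, ?_⟩
  rw [prod_image_eq_biUnion]
  have hdisj : ∀ j ∈ Finset.range x, ∀ j' ∈ Finset.range x, j ≠ j' →
      Disjoint (colset Λ ψ j) (colset Λ ψ j') := by
    intro j hj j' hj' hne
    rw [Finset.mem_range] at hj hj'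
    rcases Nat.lt_or_ge j j' with h | h
    · exact colset_disjoint Λ ψ hψ (mk_ne_of_lt Λ h (by omega))
    · have hlt : j' < j := by omega
      exact (colset_disjoint Λ ψ hψ (mk_ne_of_lt Λ hlt (by omega))).symm
  rw [Finset.card_biUnion hdisj]
  rw [Finset.sum_congr rfl (fun u _ => colset_card Λ ψ hψ hax u), Finset.sum_const,
    smul_eq_mul, Finset.card_range]

lemma ctile_rank (hψ : Function.Injective ψ) (hax : AxisTriv Λ) :
    tileRank n τ σ (ctile Λ ψ) = Nat.card (ZMod σ ⧸ lam2 Λ) := by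
  unfold tileRank
  have hset : {x : ℕ | ∃ J : Finset ℕ, J ⊆ Finset.range σ ∧ J.card = x ∧
      ((J ×ˢ Finset.range τ).image fun p => ctile Λ ψ p.2 p.1).card = x * τ}
      = Set.Iic (Nat.card (ZMod σ ⧸ lam2 Λ)) := by
    ext x
    constructor
    · rintro ⟨J, h1, h2, h3⟩
      exact rank_upper Λ ψ hψ hax h2 h3
    · intro hx
      exact rank_lower Λ ψ hψ hax hx
  rw [hset, csSup_Iic]

end Rank

section Classify

variable [NeZero τ] [NeZero σ]

/-- Valid period subgroups. -/
def ValidL (τ σ : ℕ) [NeZero τ] [NeZero σ] : Type :=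
  {Λ : AddSubgroup (ZMod τ × ZMod σ) // AxisTriv Λ ∧ Nat.card Λ = Nat.gcd τ σ}

/-- Embeddings of the quotient by a period subgroup into the states. -/
abbrev Emb (n : ℕ) (Λ : AddSubgroup (ZMod τ × ZMod σ)) : Type :=
  ((ZMod τ × ZMod σ) ⧸ Λ) ↪ Fin n

/-- Relation on embeddings: translation. -/
def erel (Λ : AddSubgroup (ZMod τ × ZMod σ)) (ψ ψ' : Emb n Λ) : Prop :=
  ∃ g : (ZMod τ × ZMod σ) ⧸ Λ, ∀ q, ψ'.1 q = ψ.1 (q + g)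

lemma gcd_pos : 0 < Nat.gcd τ σ :=
  Nat.gcd_pos_of_pos_left σ (tau_pos (τ := τ))

lemma phi_ctile (Λ : AddSubgroup (ZMod τ × ZMod σ)) (ψ : (ZMod τ × ZMod σ) ⧸ Λ → Fin n)
    (p : ZMod τ × ZMod σ) : Phi (ctile Λ ψ) p = ψ (QuotientAddGroup.mk p) := by
  show ψ _ = ψ _
  exact congrArg ψ (congrArg _ (natCast_val_pair p))

/-- The canonical tile of a valid subgroup and embedding, as a rank-x tile. -/
def ptile (L : ValidL τ σ) (ψ : Emb n L.1) : RankXTile n τ σ := by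
  refine ⟨ctile L.1 ψ.1, ctile_isPSTile L.1 ψ.1 ψ.2 L.2.1, ctile_simple L.1 ψ.1 ψ.2, ?_⟩
  rw [ctile_rank L.1 ψ.1 ψ.2 L.2.1]
  refine (Nat.div_eq_of_eq_mul_left gcd_pos ?_).symm
  have hq := quotient_card_mul L.1 L.2.1
  rw [L.2.2] at hq
  exact hq.symm

lemma ptile_apply (L : ValidL τ σ) (ψ : Emb n L.1) (i j : ℕ) :
    (ptile L ψ).1 i j = ψ.1 (QuotientAddGroup.mk ((i : ZMod τ), (j : ZMod σ))) := rfl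

/-- The period subgroup of a rank-x tile. -/
def lamOf (T : RankXTile n τ σ) : AddSubgroup (ZMod τ × ZMod σ) :=
  lam T.1 T.2.1 T.2.2.1

def psiOf (T : RankXTile n τ σ) : Emb n (lamOf T) :=
  ⟨psi T.2.1 T.2.2.1, psi_inj T.2.1 T.2.2.1⟩

lemma T_eq_ctile' (T : RankXTile n τ σ) : T.1 = ctile (lamOf T) (psiOf T).1 :=
  T_eq_ctile T.2.1 T.2.2.1

lemma lamOf_card (T : RankXTile n τ σ) : Nat.card (lamOf T) = Nat.gcd τ σ := by
  have hax := axis_of_min T.2.1 T.2.2.1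
  have hrank := T.2.2.2
  rw [T_eq_ctile' T, ctile_rank (lamOf T) (psiOf T).1 (psiOf T).2 hax] at hrank
  have hmul := quotient_card_mul (lamOf T) hax
  have hdvd : Nat.gcd τ σ ∣ σ := Nat.gcd_dvd_right τ σ
  have hpos : 0 < σ / Nat.gcd τ σ :=
    Nat.div_pos (Nat.le_of_dvd (sigma_pos (σ := σ)) hdvd) gcd_pos
  have hσ : σ = (σ / Nat.gcd τ σ) * Nat.gcd τ σ := (Nat.div_mul_cancel hdvd).symm
  rw [hrank] at hmul
  exact Nat.eq_of_mul_eq_mul_left hpos (hmul.trans hσ)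

/-- The valid subgroup of a rank-x tile. -/
def lamOf' (T : RankXTile n τ σ) : ValidL τ σ :=
  ⟨lamOf T, axis_of_min T.2.1 T.2.2.1, lamOf_card T⟩

lemma card_quot_eq_lcm (L : ValidL τ σ) :
    Nat.card ((ZMod τ × ZMod σ) ⧸ L.1) = Nat.lcm τ σ := by
  have h := AddSubgroup.card_eq_card_quotient_mul_card_addSubgroup L.1
  rw [Nat.card_prod, Nat.card_zmod, Nat.card_zmod, L.2.2] at h
  have h4 : Nat.gcd τ σ * Nat.card ((ZMod τ × ZMod σ) ⧸ L.1) = Nat.gcd τ σ * Nat.lcm τ σ := by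
    rw [Nat.gcd_mul_lcm, h, mul_comm]
  exact Nat.eq_of_mul_eq_mul_left gcd_pos h4

/-- Key lemma for sigma-quotient equalities. -/
lemma sigma_quot_eq {L₁ L₂ : ValidL τ σ} (h : L₁.1 = L₂.1)
    (ψ₁ : Emb n L₁.1) (ψ₂ : Emb n L₂.1)
    (hrel : ∃ g : ZMod τ × ZMod σ, ∀ p : ZMod τ × ZMod σ,
      ψ₂.1 (QuotientAddGroup.mk p) = ψ₁.1 (QuotientAddGroup.mk (p + g))) :
    (⟨L₁, Quot.mk (erel L₁.1) ψ₁⟩ : Σ L : ValidL τ σ, Quot (erel (n := n) L.1)) =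
      ⟨L₂, Quot.mk (erel L₂.1) ψ₂⟩ := by
  obtain ⟨v₁, hv₁⟩ := L₁
  obtain ⟨v₂, hv₂⟩ := L₂
  obtain rfl : v₁ = v₂ := h
  refine congrArg (Sigma.mk (⟨v₁, hv₁⟩ : ValidL τ σ)) ?_
  apply Quot.sound
  obtain ⟨g, hg⟩ := hrel
  refine ⟨QuotientAddGroup.mk g, ?_⟩
  intro q
  induction q using QuotientAddGroup.induction_on
  rename_i p
  exact hg p

lemma phi_shift {T₁ T₂ : ℕ → ℕ → Fin n} (hp1 : IsTilePeriodic τ σ T₁) {r c : ℕ}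
    (hsh : ∀ i j, T₂ i j = T₁ (i + r) (j + c)) (p : ZMod τ × ZMod σ) :
    Phi T₂ p = Phi T₁ (p + ((r : ZMod τ), (c : ZMod σ))) := by
  rw [phi_add hp1 p ((r : ZMod τ), (c : ZMod σ))]
  show T₂ p.1.val p.2.val = _
  rw [hsh]
  have h1 : p.1.val + r ≡ p.1.val + (((r : ℕ) : ZMod τ)).val [MOD τ] := by
    rw [ZMod.val_natCast]
    exact Nat.ModEq.add_left _ (Nat.mod_modEq r τ).symm
  have h2 : p.2.val + c ≡ p.2.val + (((c : ℕ) : ZMod σ)).val [MOD σ] := by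
    rw [ZMod.val_natCast]
    exact Nat.ModEq.add_left _ (Nat.mod_modEq c σ).symm
  exact T_congr hp1 h1 h2

/-- toFun for the main equivalence. -/
def classifyFun : TileClass n τ σ → Σ L : ValidL τ σ, Quot (erel (n := n) L.1) := by
  refine Quot.lift (fun T => ⟨lamOf' T, Quot.mk _ (psiOf T)⟩) ?_
  intro T₁ T₂ hsh
  obtain ⟨r, c, hrc⟩ := hsh
  have hphi : ∀ p, Phi T₂.1 p = Phi T₁.1 (p + ((r : ZMod τ), (c : ZMod σ))) :=
    phi_shift T₁.2.1.1 hrc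
  have hlam : (lamOf' T₁).1 = (lamOf' T₂).1 := by
    ext p
    show Phi T₁.1 p = Phi T₁.1 0 ↔ Phi T₂.1 p = Phi T₂.1 0
    rw [hphi, hphi]
    constructor
    · intro h
      exact phi_trans T₁.2.1 T₁.2.2.1 h ((r : ZMod τ), (c : ZMod σ))
    · intro h
      have h2 := phi_trans T₁.2.1 T₁.2.2.1 h (-((r : ZMod τ), (c : ZMod σ)))
      have e : ∀ z : ZMod τ × ZMod σ,
          z + ((r : ZMod τ), (c : ZMod σ)) + -((r : ZMod τ), (c : ZMod σ)) = z :=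
        fun z => add_neg_cancel_right z _
      rw [e, e] at h2
      exact h2
  apply sigma_quot_eq hlam
  refine ⟨((r : ZMod τ), (c : ZMod σ)), ?_⟩
  intro p
  show Phi T₂.1 p = Phi T₁.1 (p + _)
  exact hphi p

/-- invFun for the main equivalence. -/
def classifyInv : (Σ L : ValidL τ σ, Quot (erel (n := n) L.1)) → TileClass n τ σ :=
  fun s => Quot.lift (fun ψ => Quot.mk shiftRel (ptile s.1 ψ)) (by
    intro ψ ψ' hrel
    obtain ⟨g, hg⟩ := hrel
    obtain ⟨gr, hgr⟩ := Quot.exists_rep g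
    apply Quot.sound
    refine ⟨gr.1.val, gr.2.val, ?_⟩
    intro i j
    rw [ptile_apply, ptile_apply, hg, ← hgr]
    show ψ.1 (QuotientAddGroup.mk (((i : ZMod τ), (j : ZMod σ)) + gr)) = ψ.1 _
    refine congrArg ψ.1 (congrArg QuotientAddGroup.mk ?_)
    push_cast
    rw [cast_val_t, cast_val_s]
    rfl) s.2

/-- The classification equivalence. -/
noncomputable def classify : TileClass n τ σ ≃ Σ L : ValidL τ σ, Quot (erel (n := n) L.1) where
  toFun := classifyFun
  invFun := classifyInv
  left_inv := by
    intro t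
    induction t using Quot.ind
    rename_i T
    show Quot.mk shiftRel (ptile (lamOf' T) (psiOf T)) = Quot.mk shiftRel T
    exact congrArg (Quot.mk shiftRel) (Subtype.ext (T_eq_ctile' T).symm)
  right_inv := by
    rintro ⟨L, qc⟩
    induction qc using Quot.ind
    rename_i ψ
    show (⟨lamOf' (ptile L ψ), Quot.mk _ (psiOf (ptile L ψ))⟩ :
      Σ L : ValidL τ σ, Quot (erel (n := n) L.1)) = ⟨L, Quot.mk _ ψ⟩
    have hlam : (lamOf' (ptile L ψ)).1 = L.1 := by
      ext p
      show Phi (ctile L.1 ψ.1) p = Phi (ctile L.1 ψ.1) 0 ↔ p ∈ L.1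
      rw [phi_ctile, phi_ctile]
      constructor
      · intro h
        have := ψ.2 h
        rw [show ((0 : ZMod τ × ZMod σ) : (ZMod τ × ZMod σ) ⧸ L.1) = 0 from rfl] at this
        exact (QuotientAddGroup.eq_zero_iff p).1 this
      · intro h
        exact congrArg ψ.1 ((QuotientAddGroup.eq_zero_iff p).2 h)
    apply sigma_quot_eq hlam
    refine ⟨0, ?_⟩
    intro p
    rw [add_zero]
    show ψ.1 _ = Phi (ctile L.1 ψ.1) p
    rw [phi_ctile]

end Classify

section Hdiv

variable (d N : ℕ) [NeZero d] [NeZero N]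

/-- The canonical embedding of `ZMod d` into `ZMod N` when `d ∣ N`. -/
def hdiv (hd : d ∣ N) : ZMod d →+ ZMod N :=
  AddMonoidHom.mk' (fun y => ((N / d * y.val : ℕ) : ZMod N)) (by
    intro y z
    have h1 : (y + z).val ≡ y.val + z.val [MOD d] := by
      rw [ZMod.val_add]
      exact (Nat.mod_modEq _ d)
    have h2 : N / d * (y + z).val ≡ N / d * (y.val + z.val) [MOD N] := by
      have := Nat.ModEq.mul_left' (c := N / d) h1
      rwa [Nat.div_mul_cancel hd] at this
    calc ((N / d * (y + z).val : ℕ) : ZMod N)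
        = ((N / d * (y.val + z.val) : ℕ) : ZMod N) := (ZMod.natCast_eq_natCast_iff _ _ _).2 h2
      _ = _ := by push_cast; ring)

lemma hdiv_apply (hd : d ∣ N) (y : ZMod d) :
    hdiv d N hd y = ((N / d * y.val : ℕ) : ZMod N) := rfl

lemma hdiv_inj (hd : d ∣ N) : Function.Injective (hdiv d N hd) := by
  intro y z h
  rw [hdiv_apply, hdiv_apply, ZMod.natCast_eq_natCast_iff] at h
  have hNd : 0 < N / d := Nat.div_pos (Nat.le_of_dvd (Nat.pos_of_ne_zero (NeZero.ne N)) hd)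
    (Nat.pos_of_ne_zero (NeZero.ne d))
  have h2 := Nat.ModEq.cancel_left_div_gcd (Nat.pos_of_ne_zero (NeZero.ne N)) h
  have h3 : Nat.gcd N (N / d) = N / d := Nat.gcd_eq_right (Nat.div_dvd_of_dvd hd)
  rw [h3, Nat.div_div_self hd (NeZero.ne N)] at h2
  have h4 : y.val = z.val := by
    have := h2
    rwa [Nat.ModEq, Nat.mod_eq_of_lt (ZMod.val_lt y), Nat.mod_eq_of_lt (ZMod.val_lt z)] at this
  have : ((y.val : ℕ) : ZMod d) = ((z.val : ℕ) : ZMod d) := by rw [h4]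
  rwa [ZMod.natCast_rightInverse y, ZMod.natCast_rightInverse z] at this

lemma hdiv_mem_of_nsmul_zero (hd : d ∣ N) {a : ZMod N} (h : d • a = 0) :
    ∃ y : ZMod d, hdiv d N hd y = a := by
  have h1 : ((d * a.val : ℕ) : ZMod N) = 0 := by
    push_cast
    rw [ZMod.natCast_rightInverse a]
    rw [← nsmul_eq_mul]
    exact h
  have h2 : N ∣ d * a.val := (ZMod.natCast_eq_zero_iff _ _).1 h1
  have h3 : N / d ∣ a.val := by
    obtain ⟨k, hk⟩ := h2
    have hN : N = d * (N / d) := (Nat.mul_div_cancel' hd).symm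
    refine ⟨k, ?_⟩
    have hd0 : 0 < d := Nat.pos_of_ne_zero (NeZero.ne d)
    have : d * a.val = d * ((N / d) * k) := by
      rw [hk]
      conv_lhs => rw [hN]
      ring
    exact Nat.eq_of_mul_eq_mul_left hd0 this
  refine ⟨((a.val / (N / d) : ℕ) : ZMod d), ?_⟩
  rw [hdiv_apply]
  have : N / d * (((a.val / (N / d) : ℕ) : ZMod d)).val ≡ N / d * (a.val / (N / d)) [MOD N] := by
    have hmod : (((a.val / (N / d) : ℕ) : ZMod d)).val ≡ a.val / (N / d) [MOD d] := by
      rw [ZMod.val_natCast]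
      exact Nat.mod_modEq _ d
    have := Nat.ModEq.mul_left' (c := N / d) hmod
    rwa [Nat.div_mul_cancel hd] at this
  rw [(ZMod.natCast_eq_natCast_iff _ _ _).2 this, Nat.mul_div_cancel' h3,
    ZMod.natCast_rightInverse a]

end Hdiv

section CountValid

lemma addSubgroup_eq_of_le_of_card_le {G : Type*} [AddGroup G] [Finite G]
    {H K : AddSubgroup G} (h : H ≤ K) (hc : Nat.card K ≤ Nat.card H) : H = K := by
  have hinj : Function.Injective (fun x : H => (⟨x.1, h x.2⟩ : K)) := by
    intro x y hxy
    exact Subtype.ext (by simpa using congrArg Subtype.val hxy)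
  have hcard : Nat.card H = Nat.card K :=
    le_antisymm (Nat.card_le_card_of_injective _ hinj) hc
  have hbij : Function.Bijective (fun x : H => (⟨x.1, h x.2⟩ : K)) :=
    (Nat.bijective_iff_injective_and_card _).2 ⟨hinj, hcard⟩
  ext g
  refine ⟨fun hg => h hg, fun hg => ?_⟩
  obtain ⟨x, hx⟩ := hbij.2 ⟨g, hg⟩
  have : x.1 = g := congrArg Subtype.val hx
  rw [← this]
  exact x.2

lemma addMonoidHom_card_range {A B : Type*} [AddGroup A] [AddGroup B] (f : A →+ B)
    (hf : Function.Injective f) : Nat.card f.range = Nat.card A := by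
  refine Nat.card_congr (Equiv.ofBijective (fun a => (⟨f a, a, rfl⟩ : f.range)) ⟨?_, ?_⟩).symm
  · intro a b hab
    exact hf (congrArg Subtype.val hab)
  · rintro ⟨b, a, rfl⟩
    exact ⟨a, rfl⟩

variable {τ σ : ℕ} [NeZero τ] [NeZero σ]

local instance : NeZero (Nat.gcd τ σ) :=
  ⟨(Nat.gcd_pos_of_pos_left σ (Nat.pos_of_ne_zero (NeZero.ne τ))).ne'⟩

/-- The homomorphism whose range is the valid subgroup determined by `w`. -/
def Fu (w : ZMod (Nat.gcd τ σ)) : ZMod (Nat.gcd τ σ) →+ ZMod τ × ZMod σ :=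
  (hdiv (Nat.gcd τ σ) τ (Nat.gcd_dvd_left τ σ)).prod
    ((hdiv (Nat.gcd τ σ) σ (Nat.gcd_dvd_right τ σ)).comp (AddMonoidHom.mulLeft w))

lemma Fu_apply (w y : ZMod (Nat.gcd τ σ)) :
    Fu (τ := τ) (σ := σ) w y = (hdiv _ τ (Nat.gcd_dvd_left τ σ) y,
      hdiv _ σ (Nat.gcd_dvd_right τ σ) (w * y)) := rfl

lemma Fu_inj (w : ZMod (Nat.gcd τ σ)) : Function.Injective (Fu (τ := τ) (σ := σ) w) := by
  intro y z h
  exact hdiv_inj _ τ (Nat.gcd_dvd_left τ σ) (congrArg Prod.fst h)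

lemma Fu_card (w : ZMod (Nat.gcd τ σ)) :
    Nat.card ((Fu (τ := τ) (σ := σ) w).range) = Nat.gcd τ σ := by
  rw [addMonoidHom_card_range _ (Fu_inj w), Nat.card_zmod]

lemma Fu_axis (u : (ZMod (Nat.gcd τ σ))ˣ) : AxisTriv ((Fu (τ := τ) (σ := σ) u.1).range) := by
  constructor
  · intro a ha
    obtain ⟨y, hy⟩ := ha
    rw [Fu_apply] at hy
    have h2 : hdiv _ σ (Nat.gcd_dvd_right τ σ) (u.1 * y) = 0 := congrArg Prod.snd hy
    have h3 : u.1 * y = 0 := by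
      apply hdiv_inj _ σ (Nat.gcd_dvd_right τ σ)
      rw [h2, map_zero]
    have h4 : y = 0 := by
      have := congrArg (fun z => (u⁻¹.1 : ZMod (Nat.gcd τ σ)) * z) h3
      simpa [← mul_assoc] using this
    have h5 : hdiv _ τ (Nat.gcd_dvd_left τ σ) y = a := congrArg Prod.fst hy
    rw [h4, map_zero] at h5
    exact h5.symm
  · intro b hb
    obtain ⟨y, hy⟩ := hb
    rw [Fu_apply] at hy
    have h2 : hdiv _ τ (Nat.gcd_dvd_left τ σ) y = 0 := congrArg Prod.fst hy
    have h3 : y = 0 := by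
      apply hdiv_inj _ τ (Nat.gcd_dvd_left τ σ)
      rw [h2, map_zero]
    have h5 : hdiv _ σ (Nat.gcd_dvd_right τ σ) (u.1 * y) = b := congrArg Prod.snd hy
    rw [h3, mul_zero, map_zero] at h5
    exact h5.symm

/-- The parametrization of valid subgroups by units. -/
def toValid (u : (ZMod (Nat.gcd τ σ))ˣ) : ValidL τ σ :=
  ⟨(Fu (τ := τ) (σ := σ) u.1).range, Fu_axis u, Fu_card u.1⟩

lemma toValid_inj : Function.Injective (toValid (τ := τ) (σ := σ)) := by
  intro u v huv
  have h1 : (Fu (τ := τ) (σ := σ) u.1).range = (Fu v.1).range :=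
    congrArg Subtype.val huv
  have h2 : Fu (τ := τ) (σ := σ) u.1 1 ∈ (Fu v.1).range := by
    rw [← h1]
    exact ⟨1, rfl⟩
  obtain ⟨y, hy⟩ := h2
  rw [Fu_apply, Fu_apply] at hy
  have h3 : y = 1 := hdiv_inj _ τ (Nat.gcd_dvd_left τ σ) (congrArg Prod.fst hy)
  have h4 : v.1 * y = u.1 * 1 := hdiv_inj _ σ (Nat.gcd_dvd_right τ σ) (congrArg Prod.snd hy)
  rw [h3, mul_one, mul_one] at h4
  exact Units.ext h4.symm

lemma nsmul_cast_one (m : ℕ) (w : ZMod (Nat.gcd τ σ)) :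
    m • w = ((m : ℕ) : ZMod (Nat.gcd τ σ)) * w := by
  rw [nsmul_eq_mul]

lemma toValid_surj : Function.Surjective (toValid (τ := τ) (σ := σ)) := by
  intro L
  -- every element of L is d-torsion
  have storsion : ∀ p ∈ L.1, (Nat.gcd τ σ) • p = 0 := by
    intro p hp
    have h1 : Nat.card L.1 • (⟨p, hp⟩ : L.1) = 0 := card_nsmul_eq_zero'
    rw [L.2.2] at h1
    have := congrArg Subtype.val h1
    simpa using this
  have hcomp : ∀ p ∈ L.1, ∃ y z : ZMod (Nat.gcd τ σ),
      p.1 = hdiv _ τ (Nat.gcd_dvd_left τ σ) y ∧ p.2 = hdiv _ σ (Nat.gcd_dvd_right τ σ) z := by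
    intro p hp
    have h1 := storsion p hp
    have h2 : (Nat.gcd τ σ) • p.1 = 0 := congrArg Prod.fst h1
    have h3 : (Nat.gcd τ σ) • p.2 = 0 := congrArg Prod.snd h1
    obtain ⟨y, hy⟩ := hdiv_mem_of_nsmul_zero _ τ (Nat.gcd_dvd_left τ σ) h2
    obtain ⟨z, hz⟩ := hdiv_mem_of_nsmul_zero _ σ (Nat.gcd_dvd_right τ σ) h3
    exact ⟨y, z, hy.symm, hz.symm⟩
  -- find the element over hdiv 1
  have hS : L.1.map (AddMonoidHom.fst (ZMod τ) (ZMod σ)) =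
      (hdiv _ τ (Nat.gcd_dvd_left τ σ)).range := by
    apply addSubgroup_eq_of_le_of_card_le
    · rintro a ⟨p, hp, rfl⟩
      obtain ⟨y, z, hy, hz⟩ := hcomp p hp
      exact ⟨y, hy.symm⟩
    · -- card of range = d = card of map
      have hc1 : Nat.card ((hdiv _ τ (Nat.gcd_dvd_left τ σ)).range) = Nat.gcd τ σ :=
        addMonoidHom_card_range _ (hdiv_inj _ τ _) |>.trans (Nat.card_zmod _)
      have hc2 : Nat.card (L.1.map (AddMonoidHom.fst (ZMod τ) (ZMod σ))) = Nat.gcd τ σ := by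
        have hcgr : Nat.card (L.1.map (AddMonoidHom.fst (ZMod τ) (ZMod σ))) = Nat.card L.1 := by
          apply Nat.card_congr
          refine (Equiv.ofBijective (fun x : L.1 =>
            (⟨x.1.1, ⟨x.1, x.2, rfl⟩⟩ : L.1.map (AddMonoidHom.fst (ZMod τ) (ZMod σ)))) ⟨?_, ?_⟩).symm
          · rintro ⟨⟨a, b⟩, hm⟩ ⟨⟨a', b'⟩, hm'⟩ hxy
            have ha : a = a' := congrArg Subtype.val hxy
            subst ha
            have : ((0 : ZMod τ), -b + b') ∈ L.1 := by
              have := L.1.add_mem (L.1.neg_mem hm) hm'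
              simpa using this
            have hb := L.2.1.2 _ this
            have : b = b' := by
              have := congrArg (fun z => b + z) hb
              simpa using this.symm
            subst this
            rfl
          · rintro ⟨a, p, hp, rfl⟩
            exact ⟨⟨p, hp⟩, rfl⟩
        rw [hcgr, L.2.2]
      rw [hc1, hc2]
  have h1mem : hdiv _ τ (Nat.gcd_dvd_left τ σ) 1 ∈
      L.1.map (AddMonoidHom.fst (ZMod τ) (ZMod σ)) := by
    rw [hS]
    exact ⟨1, rfl⟩
  obtain ⟨p, hp, hp1⟩ := h1mem
  obtain ⟨y, w, hy, hw⟩ := hcomp p hp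
  have hy1 : y = 1 := by
    apply hdiv_inj _ τ (Nat.gcd_dvd_left τ σ)
    rw [← hy]
    exact hp1
  -- the key element
  have hkey : (hdiv _ τ (Nat.gcd_dvd_left τ σ) 1, hdiv _ σ (Nat.gcd_dvd_right τ σ) w) ∈ L.1 := by
    have : p = (hdiv _ τ (Nat.gcd_dvd_left τ σ) 1, hdiv _ σ (Nat.gcd_dvd_right τ σ) w) := by
      rw [← hy1, ← hy, ← hw]
    rwa [← this]
  -- range of Fu w is inside L
  have hle : (Fu (τ := τ) (σ := σ) w).range ≤ L.1 := by
    rintro q ⟨y', rfl⟩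
    have he : Fu (τ := τ) (σ := σ) w y' = y'.val •
        (hdiv _ τ (Nat.gcd_dvd_left τ σ) 1, hdiv _ σ (Nat.gcd_dvd_right τ σ) w) := by
      rw [Fu_apply]
      have e1 : y'.val • hdiv _ τ (Nat.gcd_dvd_left τ σ) 1 = hdiv _ τ (Nat.gcd_dvd_left τ σ) y' := by
        rw [← map_nsmul, nsmul_cast_one, mul_one, ZMod.natCast_rightInverse y']
      have e2 : y'.val • hdiv _ σ (Nat.gcd_dvd_right τ σ) w =
          hdiv _ σ (Nat.gcd_dvd_right τ σ) (w * y') := by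
        rw [← map_nsmul, nsmul_cast_one, ZMod.natCast_rightInverse y', mul_comm]
      rw [← e1, ← e2]
      rfl
    rw [he]
    exact AddSubgroup.nsmul_mem _ hkey _
  have heq : (Fu (τ := τ) (σ := σ) w).range = L.1 := by
    apply addSubgroup_eq_of_le_of_card_le hle
    rw [Fu_card w, L.2.2]
  -- w is a unit
  have hwu : IsUnit w := by
    have hinj : Function.Injective (AddMonoidHom.mulLeft w : ZMod (Nat.gcd τ σ) →+ _) := by
      rw [injective_iff_map_eq_zero]
      intro y hy0
      have hmem : ((hdiv _ τ (Nat.gcd_dvd_left τ σ) y), (0 : ZMod σ)) ∈ L.1 := by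
        rw [← heq]
        refine ⟨y, ?_⟩
        rw [Fu_apply]
        have : w * y = 0 := hy0
        rw [this, map_zero]
      have := L.2.1.1 _ hmem
      apply hdiv_inj _ τ (Nat.gcd_dvd_left τ σ)
      rw [this, map_zero]
    have hsurj : Function.Surjective (AddMonoidHom.mulLeft w : ZMod (Nat.gcd τ σ) →+ _) :=
      Finite.surjective_of_injective hinj
    obtain ⟨v, hv⟩ := hsurj 1
    exact IsUnit.of_mul_eq_one v hv
  refine ⟨hwu.unit, ?_⟩
  apply Subtype.ext
  show (Fu (τ := τ) (σ := σ) (hwu.unit).1).range = L.1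
  rw [IsUnit.unit_spec]
  exact heq

lemma card_validL : Nat.card (ValidL τ σ) = Nat.totient (Nat.gcd τ σ) := by
  rw [← Nat.card_congr (Equiv.ofBijective _ ⟨toValid_inj (τ := τ) (σ := σ), toValid_surj⟩)]
  rw [Nat.card_eq_fintype_card, ZMod.card_units_eq_totient]

end CountValid

section Counting

variable [NeZero τ] [NeZero σ]

noncomputable local instance qfin (Λ : AddSubgroup (ZMod τ × ZMod σ)) :
    Fintype ((ZMod τ × ZMod σ) ⧸ Λ) := Fintype.ofFinite _

local instance embFinite (Λ : AddSubgroup (ZMod τ × ZMod σ)) : Finite (Emb n Λ) := by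
  unfold Emb
  infer_instance

/-- Shift an embedding by a translation. -/
def shifted {Λ : AddSubgroup (ZMod τ × ZMod σ)} (ψ : Emb n Λ) (g : (ZMod τ × ZMod σ) ⧸ Λ) :
    Emb n Λ :=
  ⟨fun q => ψ.1 (q + g), fun a b h => by
    have := ψ.2 h
    exact add_right_cancel this⟩

lemma mk_shifted {Λ : AddSubgroup (ZMod τ × ZMod σ)} (ψ : Emb n Λ) (g : (ZMod τ × ZMod σ) ⧸ Λ) :
    Quot.mk (erel (n := n) Λ) (shifted ψ g) = Quot.mk _ ψ :=
  (Quot.sound ⟨g, fun _ => rfl⟩).symm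

lemma erel_equiv (Λ : AddSubgroup (ZMod τ × ZMod σ)) : Equivalence (erel (n := n) Λ) := by
  constructor
  · intro ψ
    exact ⟨0, fun q => by rw [add_zero]⟩
  · rintro ψ ψ' ⟨g, hg⟩
    refine ⟨-g, fun q => ?_⟩
    rw [hg, neg_add_cancel_right]
  · rintro ψ₁ ψ₂ ψ₃ ⟨g, hg⟩ ⟨g', hg'⟩
    refine ⟨g' + g, fun q => ?_⟩
    rw [hg', hg, add_assoc]

lemma mk_eq_iff_erel {Λ : AddSubgroup (ZMod τ × ZMod σ)} {ψ ψ' : Emb n Λ} :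
    Quot.mk (erel (n := n) Λ) ψ = Quot.mk _ ψ' ↔ erel Λ ψ ψ' := by
  rw [Quot.eq]
  exact Equivalence.eqvGen_iff (erel_equiv Λ)

lemma fiber_card {Λ : AddSubgroup (ZMod τ × ZMod σ)} (c : Quot (erel (n := n) Λ)) :
    Nat.card {ψ : Emb n Λ // Quot.mk _ ψ = c} = Nat.card ((ZMod τ × ZMod σ) ⧸ Λ) := by
  obtain ⟨ψ₀, rfl⟩ := Quot.exists_rep c
  symm
  apply Nat.card_congr
  refine Equiv.ofBijective (fun g => ⟨shifted ψ₀ g, mk_shifted ψ₀ g⟩) ⟨?_, ?_⟩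
  · intro g g' h
    have hval : shifted ψ₀ g = shifted ψ₀ g' := Subtype.ext_iff.1 h
    have h3 : ψ₀.1 (0 + g) = ψ₀.1 (0 + g') :=
      congrFun (congrArg (fun e : Emb n Λ => e.toFun) hval) 0
    rw [zero_add, zero_add] at h3
    exact ψ₀.2 h3
  · rintro ⟨ψ, hψ⟩
    have hrel : erel Λ ψ₀ ψ := mk_eq_iff_erel.1 hψ.symm
    obtain ⟨g, hg⟩ := hrel
    refine ⟨g, ?_⟩
    apply Subtype.ext
    apply Function.Embedding.ext
    intro q
    exact (hg q).symm

/-- Generic orbit-counting for invariant predicates. -/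
lemma card_pred {Λ : AddSubgroup (ZMod τ × ZMod σ)} (P : Quot (erel (n := n) Λ) → Prop) :
    Nat.card {ψ : Emb n Λ // P (Quot.mk _ ψ)} =
      Nat.card {c : Quot (erel (n := n) Λ) // P c} * Nat.card ((ZMod τ × ZMod σ) ⧸ Λ) := by
  classical
  letI : Fintype {ψ : Emb n Λ // P (Quot.mk _ ψ)} := Fintype.ofFinite _
  letI : Fintype {c : Quot (erel (n := n) Λ) // P c} := Fintype.ofFinite _
  let π : {ψ : Emb n Λ // P (Quot.mk _ ψ)} → {c : Quot (erel (n := n) Λ) // P c} :=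
    fun x => ⟨Quot.mk _ x.1, x.2⟩
  have hfib : ∀ c : {c : Quot (erel (n := n) Λ) // P c},
      Nat.card {x // π x = c} = Nat.card ((ZMod τ × ZMod σ) ⧸ Λ) := by
    intro c
    rw [← fiber_card (n := n) c.1]
    apply Nat.card_congr
    refine Equiv.ofBijective (fun x => ⟨x.1.1, congrArg Subtype.val x.2⟩) ⟨?_, ?_⟩
    · intro x y hxy
      apply Subtype.ext
      apply Subtype.ext
      show x.1.1 = y.1.1
      have := congrArg (fun z : {ψ : Emb n Λ // Quot.mk (erel (n := n) Λ) ψ = c.1} => z.1) hxy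
      simpa using this
    · rintro ⟨ψ, hψ⟩
      refine ⟨⟨⟨ψ, by rw [hψ]; exact c.2⟩, Subtype.ext hψ⟩, rfl⟩
  have h1 : Nat.card {ψ : Emb n Λ // P (Quot.mk _ ψ)} =
      ∑ c : {c : Quot (erel (n := n) Λ) // P c}, Nat.card {x // π x = c} := by
    rw [Nat.card_eq_fintype_card, ← Fintype.card_congr (Equiv.sigmaFiberEquiv π)]
    rw [Fintype.card_sigma]
    congr 1
    funext c
    rw [Nat.card_eq_fintype_card]
  rw [h1, Finset.sum_congr rfl (fun c _ => hfib c), Finset.sum_const, smul_eq_mul,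
    Finset.card_univ, Nat.card_eq_fintype_card, Nat.card_eq_fintype_card]

/-- The state set of an embedding class. -/
noncomputable def stL (Λ : AddSubgroup (ZMod τ × ZMod σ)) : Quot (erel (n := n) Λ) → Finset (Fin n) :=
  Quot.lift (fun ψ : Emb n Λ => Finset.univ.image ψ.1) (by
    rintro ψ ψ' ⟨g, hg⟩
    ext b
    simp only [Finset.mem_image, Finset.mem_univ, true_and]
    constructor
    · rintro ⟨q, rfl⟩
      exact ⟨q - g, by rw [hg, sub_add_cancel]⟩
    · rintro ⟨q, rfl⟩
      exact ⟨q + g, (hg q).symm⟩)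

lemma stL_mk (Λ : AddSubgroup (ZMod τ × ZMod σ)) (ψ : Emb n Λ) :
    stL Λ (Quot.mk _ ψ) = Finset.univ.image ψ.1 := rfl

lemma stL_card (Λ : AddSubgroup (ZMod τ × ZMod σ)) (c : Quot (erel (n := n) Λ)) :
    (stL Λ c).card = Nat.card ((ZMod τ × ZMod σ) ⧸ Λ) := by
  induction c using Quot.ind
  rename_i ψ
  rw [stL_mk, Finset.card_image_of_injective _ ψ.2, Finset.card_univ,
    Nat.card_eq_fintype_card]

lemma card_emb_image (Λ : AddSubgroup (ZMod τ × ZMod σ)) (S : Finset (Fin n))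
    (hS : S.card = Nat.card ((ZMod τ × ZMod σ) ⧸ Λ)) :
    Nat.card {ψ : Emb n Λ // Finset.univ.image ψ.1 = S} =
      Nat.factorial (Nat.card ((ZMod τ × ZMod σ) ⧸ Λ)) := by
  classical
  have hmem : ∀ (x : {ψ : Emb n Λ // Finset.univ.image ψ.1 = S})
      (q : (ZMod τ × ZMod σ) ⧸ Λ), x.1.1 q ∈ S := by
    rintro ⟨ψ, hψ⟩ q
    show ψ.1 q ∈ S
    rw [← hψ]
    exact Finset.mem_image.2 ⟨q, Finset.mem_univ q, rfl⟩
  have he : {ψ : Emb n Λ // Finset.univ.image ψ.1 = S} ≃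
      (((ZMod τ × ZMod σ) ⧸ Λ) ↪ {x // x ∈ S}) := by
    refine ⟨fun x => ⟨fun q => ⟨x.1.1 q, hmem x q⟩, fun a b hab => x.1.2 (congrArg Subtype.val hab)⟩,
      fun e => ⟨⟨fun q => (e q).1, fun a b hab => e.injective (Subtype.ext hab)⟩, ?_⟩,
      fun x => ?_, fun e => ?_⟩
    · apply Finset.eq_of_subset_of_card_le
      · intro b hb
        obtain ⟨q, -, rfl⟩ := Finset.mem_image.1 hb
        exact (e q).2
      · rw [hS, Finset.card_image_of_injective _ (fun a b hab => e.injective (Subtype.ext hab)),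
          Finset.card_univ, Nat.card_eq_fintype_card]
    · apply Subtype.ext
      apply Function.Embedding.ext
      intro q
      rfl
    · apply Function.Embedding.ext
      intro q
      rfl
  rw [Nat.card_congr he, Nat.card_eq_fintype_card, Fintype.card_embedding_eq,
    Fintype.card_coe, hS, ← Nat.card_eq_fintype_card, Nat.descFactorial_self]

lemma card_classes_image (Λ : AddSubgroup (ZMod τ × ZMod σ)) (S : Finset (Fin n))
    (hS : S.card = Nat.card ((ZMod τ × ZMod σ) ⧸ Λ)) :
    Nat.card {c : Quot (erel (n := n) Λ) // stL Λ c = S} *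
        Nat.card ((ZMod τ × ZMod σ) ⧸ Λ) =
      Nat.factorial (Nat.card ((ZMod τ × ZMod σ) ⧸ Λ)) := by
  rw [← card_pred (fun c => stL Λ c = S)]
  rw [← card_emb_image Λ S hS]
  apply Nat.card_congr
  exact Equiv.subtypeEquivRight (fun ψ => by rw [stL_mk])

lemma card_quot_total (Λ : AddSubgroup (ZMod τ × ZMod σ)) :
    Nat.card (Quot (erel (n := n) Λ)) * Nat.card ((ZMod τ × ZMod σ) ⧸ Λ) =
      Nat.descFactorial n (Nat.card ((ZMod τ × ZMod σ) ⧸ Λ)) := by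
  classical
  have h := card_pred (Λ := Λ) (n := n) (fun _ => True)
  have h1 : Nat.card {ψ : Emb n Λ // True} = Nat.card (Emb n Λ) :=
    Nat.card_congr (Equiv.subtypeUnivEquiv (fun _ => trivial))
  have h2 : Nat.card {c : Quot (erel (n := n) Λ) // True} = Nat.card (Quot (erel (n := n) Λ)) :=
    Nat.card_congr (Equiv.subtypeUnivEquiv (fun _ => trivial))
  rw [h1, h2] at h
  rw [← h]
  letI : Fintype (Emb n Λ) := Fintype.ofFinite _
  rw [Nat.card_eq_fintype_card, Fintype.card_embedding_eq, Fintype.card_fin,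
    Nat.card_eq_fintype_card]

/-- Sigma of constant-size finite families. -/
lemma nat_card_sigma_const {ι : Type*} [Finite ι] {F : ι → Type*} [∀ i, Finite (F i)]
    (m : ℕ) (h : ∀ i, Nat.card (F i) = m) : Nat.card (Σ i, F i) = Nat.card ι * m := by
  classical
  letI := Fintype.ofFinite ι
  letI : ∀ i, Fintype (F i) := fun i => Fintype.ofFinite _
  rw [Nat.card_eq_fintype_card, Fintype.card_sigma,
    Finset.sum_congr rfl (fun i _ => by rw [← Nat.card_eq_fintype_card, h i]),
    Finset.sum_const, smul_eq_mul, Finset.card_univ, Nat.card_eq_fintype_card]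

/-- Sigma-subtype commutation. -/
def sigmaSubtypeEquiv {ι : Type*} {F : ι → Type*} (P : ∀ i, F i → Prop) :
    {s : Σ i, F i // P s.1 s.2} ≃ Σ i, {x : F i // P i x} where
  toFun s := ⟨s.1.1, s.1.2, s.2⟩
  invFun s := ⟨⟨s.1, s.2.1⟩, s.2.2⟩
  left_inv s := rfl
  right_inv s := rfl

/-- Product-subtype to sigma. -/
def prodSubtypeEquivSigma {α : Type*} (P : α → α → Prop) :
    {p : α × α // P p.1 p.2} ≃ Σ a : α, {b : α // P a b} where
  toFun x := ⟨x.1.1, x.1.2, x.2⟩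
  invFun s := ⟨(s.1, s.2.1), s.2.2⟩
  left_inv x := rfl
  right_inv s := rfl

local instance : Finite (ValidL τ σ) := by
  unfold ValidL
  infer_instance

local instance : Finite (TileClass n τ σ) :=
  Finite.of_equiv _ (classify (n := n) (τ := τ) (σ := σ)).symm

/-- The state set of a tile class. -/
noncomputable def stT : TileClass n τ σ → Finset (Fin n) :=
  fun t => stL (classifyFun t).1.1 (classifyFun t).2

lemma stT_mk (T : RankXTile n τ σ) :
    stT (Quot.mk shiftRel T) = tileStates n τ σ T.1 := by
  show stL (lamOf T) (Quot.mk _ (psiOf T)) = _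
  rw [stL_mk]
  conv_rhs => rw [T_eq_ctile' T]
  exact (ctile_states (lamOf T) (psiOf T).1).symm

lemma stT_card (t : TileClass n τ σ) : (stT t).card = Nat.lcm τ σ := by
  show (stL (classifyFun t).1.1 (classifyFun t).2).card = _
  rw [stL_card, card_quot_eq_lcm]

lemma commonStates_iff (q₁ q₂ : TileClass n τ σ) (m : ℕ) :
    commonStates q₁ q₂ m ↔ (stT q₁ ∩ stT q₂).card = m := by
  constructor
  · rintro ⟨T₁, T₂, h1, h2, h3⟩
    rw [← h1, ← h2, stT_mk, stT_mk]
    exact h3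
  · intro h
    obtain ⟨T₁, h1⟩ := Quot.exists_rep q₁
    obtain ⟨T₂, h2⟩ := Quot.exists_rep q₂
    refine ⟨T₁, T₂, h1, h2, ?_⟩
    rw [← stT_mk, ← stT_mk, h1, h2]
    exact h

lemma lcm_pos : 0 < Nat.lcm τ σ :=
  Nat.pos_of_ne_zero (Nat.lcm_ne_zero (NeZero.ne τ) (NeZero.ne σ))

lemma factorial_lcm : Nat.factorial (Nat.lcm τ σ) =
    Nat.lcm τ σ * Nat.factorial (Nat.lcm τ σ - 1) := by
  have h : Nat.lcm τ σ - 1 + 1 = Nat.lcm τ σ := Nat.succ_pred_eq_of_pos (lcm_pos (τ := τ))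
  conv_lhs => rw [← h]
  rw [Nat.factorial_succ, h]

lemma card_stT_fiber (S : Finset (Fin n)) :
    Nat.card {t : TileClass n τ σ // stT t = S} * Nat.lcm τ σ =
      Nat.card {s : Σ L : ValidL τ σ, Quot (erel (n := n) L.1) // stL s.1.1 s.2 = S} *
        Nat.lcm τ σ := by
  congr 1
  apply Nat.card_congr
  exact Equiv.subtypeEquiv classify (fun t => Iff.rfl)

lemma card_stT_fiber' (S : Finset (Fin n)) (hS : S.card = Nat.lcm τ σ) :
    Nat.card {t : TileClass n τ σ // stT t = S} =
      Nat.totient (Nat.gcd τ σ) * Nat.factorial (Nat.lcm τ σ - 1) := by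
  have e1 : {t : TileClass n τ σ // stT t = S} ≃
      Σ L : ValidL τ σ, {c : Quot (erel (n := n) L.1) // stL L.1 c = S} :=
    (Equiv.subtypeEquiv classify (fun t => Iff.rfl)).trans
      (sigmaSubtypeEquiv (fun (L : ValidL τ σ) c => stL L.1 c = S))
  rw [Nat.card_congr e1]
  have hper : ∀ L : ValidL τ σ,
      Nat.card {c : Quot (erel (n := n) L.1) // stL L.1 c = S} =
        Nat.factorial (Nat.lcm τ σ - 1) := by
    intro L
    have h := card_classes_image L.1 S (by rw [hS, card_quot_eq_lcm])
    rw [card_quot_eq_lcm, factorial_lcm] at h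
    have h2 : Nat.card {c : Quot (erel (n := n) L.1) // stL L.1 c = S} * Nat.lcm τ σ =
        Nat.factorial (Nat.lcm τ σ - 1) * Nat.lcm τ σ := by
      rw [h]
      ring
    exact Nat.eq_of_mul_eq_mul_right (lcm_pos (τ := τ)) h2
  rw [nat_card_sigma_const _ hper, card_validL]

lemma card_tileClass : Nat.card (TileClass n τ σ) =
    Nat.totient (Nat.gcd τ σ) * Nat.choose n (Nat.lcm τ σ) *
      Nat.factorial (Nat.lcm τ σ - 1) := by
  rw [Nat.card_congr (classify (n := n) (τ := τ) (σ := σ))]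
  have hper : ∀ L : ValidL τ σ, Nat.card (Quot (erel (n := n) L.1)) =
      Nat.choose n (Nat.lcm τ σ) * Nat.factorial (Nat.lcm τ σ - 1) := by
    intro L
    have h := card_quot_total (n := n) L.1
    rw [card_quot_eq_lcm, Nat.descFactorial_eq_factorial_mul_choose, factorial_lcm] at h
    have h2 : Nat.card (Quot (erel (n := n) L.1)) * Nat.lcm τ σ =
        Nat.choose n (Nat.lcm τ σ) * Nat.factorial (Nat.lcm τ σ - 1) * Nat.lcm τ σ := by
      rw [h]
      ring
    exact Nat.eq_of_mul_eq_mul_right (lcm_pos (τ := τ)) h2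
  rw [nat_card_sigma_const _ hper, card_validL]
  ring

lemma card_subtype_ne_of {α : Type*} [Finite α] (p : α → Prop) (a : α) (ha : p a) :
    Nat.card {b : α // b ≠ a ∧ p b} = Nat.card {b : α // p b} - 1 := by
  classical
  letI := Fintype.ofFinite α
  have e : {b : α // b ≠ a ∧ p b} ≃ {x : {b : α // p b} // ¬ (x = ⟨a, ha⟩)} := by
    refine ⟨fun b => ⟨⟨b.1, b.2.2⟩, fun h => b.2.1 (Subtype.ext_iff.1 h)⟩,
      fun x => ⟨x.1.1, fun h => x.2 (Subtype.ext h), x.1.2⟩, fun b => rfl, fun x => rfl⟩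
  rw [Nat.card_congr e, Nat.card_eq_fintype_card, Nat.card_eq_fintype_card,
    Fintype.card_subtype_compl, Fintype.card_subtype_eq]

lemma inter_card_eq_iff {α : Type*} [DecidableEq α] {s t : Finset α} {k : ℕ}
    (hs : s.card = k) (ht : t.card = k) : (s ∩ t).card = k ↔ s = t := by
  constructor
  · intro h
    have h1 : s ∩ t = s := Finset.eq_of_subset_of_card_le Finset.inter_subset_left
      (by rw [h, hs])
    have h2 : s ∩ t = t := Finset.eq_of_subset_of_card_le Finset.inter_subset_right
      (by rw [h, ht])
    rw [← h1, h2]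
  · intro h
    rw [h, Finset.inter_self, ht]

lemma card_subtype_by_fiber {α : Type*} [Finite α] (g : α → Finset (Fin n))
    (f : Finset (Fin n) → Prop) (N : ℕ)
    (hconst : ∀ S, f S → Nat.card {a : α // g a = S} = N) :
    Nat.card {a : α // f (g a)} = Nat.card {S : Finset (Fin n) // f S} * N := by
  classical
  letI := Fintype.ofFinite α
  rw [Nat.card_eq_fintype_card, Nat.card_eq_fintype_card, Fintype.card_subtype,
    Fintype.card_subtype]
  rw [Finset.card_eq_sum_card_fiberwise (f := g)
    (t := Finset.univ.filter f) (fun x hx => by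
      simp only [Finset.mem_coe, Finset.mem_filter, Finset.mem_univ, true_and] at hx ⊢
      exact hx)]
  have hper : ∀ S ∈ Finset.univ.filter f,
      ((Finset.univ.filter (fun a : α => f (g a))).filter (fun x => g x = S)).card = N := by
    intro S hS
    rw [Finset.mem_filter] at hS
    have heq : (Finset.univ.filter (fun a : α => f (g a))).filter (fun x => g x = S) =
        Finset.univ.filter (fun a : α => g a = S) := by
      ext a
      simp only [Finset.mem_filter, Finset.mem_univ, true_and]
      constructor
      · rintro ⟨-, h2⟩
        exact h2
      · intro h
        exact ⟨by rw [h]; exact hS.2, h⟩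
    rw [heq, ← Fintype.card_subtype, ← Nat.card_eq_fintype_card]
    exact hconst S hS.2
  rw [Finset.sum_congr rfl hper, Finset.sum_const, smul_eq_mul]

lemma card_subsets_inter (S₀ : Finset (Fin n)) (k m : ℕ) (hS₀ : S₀.card = k) (hm : m ≤ k) :
    Nat.card {S : Finset (Fin n) // S.card = k ∧ (S₀ ∩ S).card = m} =
      Nat.choose k m * Nat.choose (n - k) (k - m) := by
  classical
  have e : {S : Finset (Fin n) // S.card = k ∧ (S₀ ∩ S).card = m} ≃
      {A : Finset (Fin n) // A ∈ Finset.powersetCard m S₀} ×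
        {B : Finset (Fin n) // B ∈ Finset.powersetCard (k - m) S₀ᶜ} := by
    refine ⟨fun S => (⟨S₀ ∩ S.1, ?_⟩, ⟨S.1 \ S₀, ?_⟩), fun AB => ⟨AB.1.1 ∪ AB.2.1, ?_, ?_⟩,
      fun S => ?_, fun AB => ?_⟩
    · exact Finset.mem_powersetCard.2 ⟨Finset.inter_subset_left, S.2.2⟩
    · refine Finset.mem_powersetCard.2 ⟨?_, ?_⟩
      · intro x hx
        rw [Finset.mem_compl]
        exact (Finset.mem_sdiff.1 hx).2
      · have hsum := Finset.card_inter_add_card_sdiff S.1 S₀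
        rw [Finset.inter_comm] at hsum
        rw [S.2.2] at hsum
        rw [S.2.1] at hsum
        omega
    · -- card of union = k
      have hA := Finset.mem_powersetCard.1 AB.1.2
      have hB := Finset.mem_powersetCard.1 AB.2.2
      have hdisj : Disjoint AB.1.1 AB.2.1 := by
        rw [Finset.disjoint_left]
        intro x hxA hxB
        exact (Finset.mem_compl.1 (hB.1 hxB)) (hA.1 hxA)
      rw [Finset.card_union_of_disjoint hdisj, hA.2, hB.2]
      omega
    · -- inter with S₀ = A
      have hA := Finset.mem_powersetCard.1 AB.1.2
      have hB := Finset.mem_powersetCard.1 AB.2.2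
      have hinter : S₀ ∩ (AB.1.1 ∪ AB.2.1) = AB.1.1 := by
        ext x
        simp only [Finset.mem_inter, Finset.mem_union]
        constructor
        · rintro ⟨hx0, hx1 | hx2⟩
          · exact hx1
          · exact absurd hx0 (Finset.mem_compl.1 (hB.1 hx2))
        · intro hx
          exact ⟨hA.1 hx, Or.inl hx⟩
      rw [hinter, hA.2]
    · -- left inverse
      apply Subtype.ext
      show (S₀ ∩ S.1) ∪ (S.1 \ S₀) = S.1
      ext x
      simp only [Finset.mem_union, Finset.mem_inter, Finset.mem_sdiff]
      tauto
    · -- right inverse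
      have hA := Finset.mem_powersetCard.1 AB.1.2
      have hB := Finset.mem_powersetCard.1 AB.2.2
      have h1 : S₀ ∩ (AB.1.1 ∪ AB.2.1) = AB.1.1 := by
        ext x
        simp only [Finset.mem_inter, Finset.mem_union]
        constructor
        · rintro ⟨hx0, hx1 | hx2⟩
          · exact hx1
          · exact absurd hx0 (Finset.mem_compl.1 (hB.1 hx2))
        · intro hx
          exact ⟨hA.1 hx, Or.inl hx⟩
      have h2 : (AB.1.1 ∪ AB.2.1) \ S₀ = AB.2.1 := by
        ext x
        simp only [Finset.mem_sdiff, Finset.mem_union]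
        constructor
        · rintro ⟨hx1 | hx2, hx0⟩
          · exact absurd (hA.1 hx1) hx0
          · exact hx2
        · intro hx
          exact ⟨Or.inr hx, Finset.mem_compl.1 (hB.1 hx)⟩
      refine Prod.ext (Subtype.ext ?_) (Subtype.ext ?_)
      · exact h1
      · exact h2
  rw [Nat.card_congr e, Nat.card_prod, Nat.card_eq_fintype_card, Nat.card_eq_fintype_card,
    Fintype.card_coe, Fintype.card_coe, Finset.card_powersetCard, Finset.card_powersetCard,
    hS₀, Finset.card_compl, Fintype.card_fin, hS₀]

lemma card_pairs_k :
    Nat.card {p : TileClass n τ σ × TileClass n τ σ //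
        p.1 ≠ p.2 ∧ commonStates p.1 p.2 (Nat.lcm τ σ)} =
      Nat.card (TileClass n τ σ) *
        (Nat.totient (Nat.gcd τ σ) * Nat.factorial (Nat.lcm τ σ - 1) - 1) := by
  classical
  have e1 : {p : TileClass n τ σ × TileClass n τ σ //
      p.1 ≠ p.2 ∧ commonStates p.1 p.2 (Nat.lcm τ σ)} ≃
      Σ q₁ : TileClass n τ σ, {q₂ : TileClass n τ σ // q₂ ≠ q₁ ∧ stT q₂ = stT q₁} := by
    refine (Equiv.subtypeEquivRight (fun p => ?_)).trans
      (prodSubtypeEquivSigma (fun q₁ q₂ => q₂ ≠ q₁ ∧ stT q₂ = stT q₁))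
    rw [commonStates_iff, inter_card_eq_iff (stT_card p.1) (stT_card p.2)]
    constructor
    · rintro ⟨h1, h2⟩
      exact ⟨Ne.symm h1, h2.symm⟩
    · rintro ⟨h1, h2⟩
      exact ⟨Ne.symm h1, h2.symm⟩
  rw [Nat.card_congr e1]
  have hinner : ∀ q₁ : TileClass n τ σ,
      Nat.card {q₂ : TileClass n τ σ // q₂ ≠ q₁ ∧ stT q₂ = stT q₁} =
        Nat.totient (Nat.gcd τ σ) * Nat.factorial (Nat.lcm τ σ - 1) - 1 := by
    intro q₁
    rw [card_subtype_ne_of (fun q₂ => stT q₂ = stT q₁) q₁ rfl,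
      card_stT_fiber' (stT q₁) (stT_card q₁)]
  rw [nat_card_sigma_const _ hinner]

lemma card_pairs_m (m : ℕ) (hm : m < Nat.lcm τ σ) :
    Nat.card {p : TileClass n τ σ × TileClass n τ σ //
        p.1 ≠ p.2 ∧ commonStates p.1 p.2 m} =
      Nat.card (TileClass n τ σ) *
        (Nat.totient (Nat.gcd τ σ) * Nat.choose (Nat.lcm τ σ) m *
          Nat.choose (n - Nat.lcm τ σ) (Nat.lcm τ σ - m) *
          Nat.factorial (Nat.lcm τ σ - 1)) := by
  classical
  have e1 : {p : TileClass n τ σ × TileClass n τ σ //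
      p.1 ≠ p.2 ∧ commonStates p.1 p.2 m} ≃
      Σ q₁ : TileClass n τ σ, {q₂ : TileClass n τ σ // (stT q₁ ∩ stT q₂).card = m} := by
    refine (Equiv.subtypeEquivRight (fun p => ?_)).trans
      (prodSubtypeEquivSigma (fun q₁ q₂ => (stT q₁ ∩ stT q₂).card = m))
    rw [commonStates_iff]
    constructor
    · rintro ⟨-, h2⟩
      exact h2
    · intro h
      refine ⟨?_, h⟩
      intro hne
      rw [hne, Finset.inter_self, stT_card] at h
      omega
  rw [Nat.card_congr e1]
  have hinner : ∀ q₁ : TileClass n τ σ,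
      Nat.card {q₂ : TileClass n τ σ // (stT q₁ ∩ stT q₂).card = m} =
        Nat.totient (Nat.gcd τ σ) * Nat.choose (Nat.lcm τ σ) m *
          Nat.choose (n - Nat.lcm τ σ) (Nat.lcm τ σ - m) *
          Nat.factorial (Nat.lcm τ σ - 1) := by
    intro q₁
    have e2 : {q₂ : TileClass n τ σ // (stT q₁ ∩ stT q₂).card = m} ≃
        {q₂ : TileClass n τ σ // (fun S : Finset (Fin n) =>
          S.card = Nat.lcm τ σ ∧ (stT q₁ ∩ S).card = m) (stT q₂)} :=
      Equiv.subtypeEquivRight (fun q₂ => ⟨fun h => ⟨stT_card q₂, h⟩, fun h => h.2⟩)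
    rw [Nat.card_congr e2]
    have h3 := card_subtype_by_fiber (α := TileClass n τ σ) stT
      (fun S : Finset (Fin n) => S.card = Nat.lcm τ σ ∧ (stT q₁ ∩ S).card = m)
      (Nat.totient (Nat.gcd τ σ) * Nat.factorial (Nat.lcm τ σ - 1))
      (fun S hf => card_stT_fiber' S (And.left hf))
    rw [h3, card_subsets_inter (stT q₁) (Nat.lcm τ σ) m (stT_card q₁) (le_of_lt hm)]
    ring
  rw [nat_card_sigma_const _ hinner]

end Counting

end TileAux

/-- with `d = gcd(τ,σ)`, `k = lcm(τ,σ)`, `x = σ/d` and `k ≤ n`: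
(1) the number of rank-`x` simple PS tile classes is `φ(d)·C(n,k)·(k−1)!`;
(2) for `m < k` the number of ordered pairs of distinct classes with exactly `m`
common states is `φ(d)·C(n,k)·(k−1)!·φ(d)·C(k,m)·C(n−k,k−m)·(k−1)!` (twice the
number of unordered pairs); (3) for `m = k` it is
`φ(d)·C(n,k)·(k−1)!·(φ(d)·(k−1)! − 1)`. -/
theorem rank_x_tile_counts (n τ σ : ℕ) (hτ : 1 ≤ τ) (hσ : 1 ≤ σ)
    (hk : Nat.lcm τ σ ≤ n) :
    Nat.card (TileClass n τ σ)
        = Nat.totient (Nat.gcd τ σ) * Nat.choose n (Nat.lcm τ σ) *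
          Nat.factorial (Nat.lcm τ σ - 1) ∧
    (∀ m : ℕ, m < Nat.lcm τ σ →
      Nat.card {p : TileClass n τ σ × TileClass n τ σ //
          p.1 ≠ p.2 ∧ commonStates p.1 p.2 m}
        = Nat.totient (Nat.gcd τ σ) * Nat.choose n (Nat.lcm τ σ) *
            Nat.factorial (Nat.lcm τ σ - 1) *
          (Nat.totient (Nat.gcd τ σ) * Nat.choose (Nat.lcm τ σ) m *
            Nat.choose (n - Nat.lcm τ σ) (Nat.lcm τ σ - m) *
            Nat.factorial (Nat.lcm τ σ - 1))) ∧
    Nat.card {p : TileClass n τ σ × TileClass n τ σ //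
        p.1 ≠ p.2 ∧ commonStates p.1 p.2 (Nat.lcm τ σ)}
      = Nat.totient (Nat.gcd τ σ) * Nat.choose n (Nat.lcm τ σ) *
          Nat.factorial (Nat.lcm τ σ - 1) *
        (Nat.totient (Nat.gcd τ σ) * Nat.factorial (Nat.lcm τ σ - 1) - 1) := by
  haveI : NeZero τ := ⟨(Nat.lt_of_lt_of_le Nat.zero_lt_one hτ).ne'⟩
  haveI : NeZero σ := ⟨(Nat.lt_of_lt_of_le Nat.zero_lt_one hσ).ne'⟩
  refine ⟨TileAux.card_tileClass, fun m hm => ?_, ?_⟩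
  · rw [TileAux.card_pairs_m m hm, TileAux.card_tileClass]
  · rw [TileAux.card_pairs_k, TileAux.card_tileClass]
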